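/- arXiv:2510.22307 — 4 statements merged into one kernel-verified Lean document; each statement's English description precedes it below -/
import Mathlib

section
/- Let f, g : {0,1}^n → ℝ be increasing. Then |E[fg] − E[f]E[g] − (1/4)·∑_{i=1}^n Inf_i^{(1)}[f]·Inf_i^{(1)}[g]| ≤ (9/8)·∑_{1 ≤ i < j ≤ n} (‖∂_{ij} f‖_2 · ‖∂_{ij} g‖_2) / (1 + log( (‖∂_{ij} f‖_2 · ‖∂_{ij} g‖_2) / (‖∂_{ij} f‖_1 · ‖∂_{ij} g‖_1) )), where Inf_i^{(1)}[h] = E[|∂_i h|], and terms with ∂_{ij} f ≡ 0 or ∂_{ij} g ≡ 0 are interpreted as zero. -/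
open Finset MeasureTheory

/-- Expectation with respect to the uniform measure on `{0,1}^n`. -/
noncomputable def Ev (n : ℕ) (f : (Fin n → Bool) → ℝ) : ℝ :=
  (∑ x : Fin n → Bool, f x) / 2 ^ n

/-- `f` is increasing (monotone w.r.t. the coordinatewise order). -/
def Increasing' (n : ℕ) (f : (Fin n → Bool) → ℝ) : Prop :=
  ∀ x y : Fin n → Bool, (∀ i, x i ≤ y i) → f x ≤ f y

/-- `f` is submodular: `f(x∧y) + f(x∨y) ≤ f(x) + f(y)`. -/
def Submodular' (n : ℕ) (f : (Fin n → Bool) → ℝ) : Prop :=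
  ∀ x y : Fin n → Bool,
    f (fun i => x i && y i) + f (fun i => x i || y i) ≤ f x + f y

/-- `f` is supermodular: `f(x) + f(y) ≤ f(x∧y) + f(x∨y)`. -/
def Supermodular' (n : ℕ) (f : (Fin n → Bool) → ℝ) : Prop :=
  ∀ x y : Fin n → Bool,
    f x + f y ≤ f (fun i => x i && y i) + f (fun i => x i || y i)

/-- Discrete derivative `∂_i f (x) = f(x^{(i→1)}) - f(x^{(i→0)})`. -/
noncomputable def pD (n : ℕ) (i : Fin n) (f : (Fin n → Bool) → ℝ) :
    (Fin n → Bool) → ℝ :=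
  fun x => f (Function.update x i true) - f (Function.update x i false)

/-- Character `χ_S(x) = (-1)^{∑_{i ∈ S} x_i}`. -/
noncomputable def chi (n : ℕ) (S : Finset (Fin n)) (x : Fin n → Bool) : ℝ :=
  ∏ i ∈ S, (if x i then (-1 : ℝ) else 1)

/-- Fourier--Walsh coefficient `f̂(S) = E[f · χ_S]`. -/
noncomputable def fhat (n : ℕ) (f : (Fin n → Bool) → ℝ) (S : Finset (Fin n)) : ℝ :=
  Ev n (fun x => f x * chi n S x)

/-- Heat semigroup `P_t f = ∑_S e^{-t|S|} f̂(S) χ_S`. -/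
noncomputable def heat (n : ℕ) (t : ℝ) (f : (Fin n → Bool) → ℝ) :
    (Fin n → Bool) → ℝ :=
  fun x => ∑ S : Finset (Fin n), Real.exp (-(t * S.card)) * fhat n f S * chi n S x

/-- Influence of coordinate `i` on a Boolean (`{0,1}`-valued) function:
`Inf_i[f] = P[f(x) ≠ f(x ⊕ e_i)]`. -/
noncomputable def InfB (n : ℕ) (i : Fin n) (f : (Fin n → Bool) → ℝ) : ℝ :=
  Ev n (fun x => if f x = f (Function.update x i (! x i)) then 0 else 1)

/-- `L¹`-influence `Inf_i^{(1)}[f] = E[|∂_i f|]`. -/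
noncomputable def Inf1 (n : ℕ) (i : Fin n) (f : (Fin n → Bool) → ℝ) : ℝ :=
  Ev n (fun x => |pD n i f x|)

/-- `L²`-influence `Inf_i[f] = E[|∂_i f|²]` for real-valued `f`. -/
noncomputable def Inf2 (n : ℕ) (i : Fin n) (f : (Fin n → Bool) → ℝ) : ℝ :=
  Ev n (fun x => |pD n i f x| ^ 2)

/-- Difference operator `D_i f (x) = f(x) - f(x ⊕ e_i)`. -/
noncomputable def Dop (n : ℕ) (i : Fin n) (f : (Fin n → Bool) → ℝ) :
    (Fin n → Bool) → ℝ :=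
  fun x => f x - f (Function.update x i (! x i))

/-- `‖f‖_p = (E[|f|^p])^{1/p}` (also used as a quasi-norm for `0 < p < 1`). -/
noncomputable def nrm (n : ℕ) (p : ℝ) (f : (Fin n → Bool) → ℝ) : ℝ :=
  (Ev n (fun x => |f x| ^ p)) ^ (1 / p)

/-- Iterated discrete derivative along a list of coordinates. -/
noncomputable def pDList (n : ℕ) : List (Fin n) → ((Fin n → Bool) → ℝ) → ((Fin n → Bool) → ℝ)
  | [], f => f
  | i :: l, f => pD n i (pDList n l f)

/-- `∂_T f = ∂_{i₁} ∘ ⋯ ∘ ∂_{i_d} f` for `T = {i₁ < ⋯ < i_d}` (the order is immaterial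
since discrete derivatives along distinct coordinates commute). -/
noncomputable def pDT (n : ℕ) (T : Finset (Fin n)) (f : (Fin n → Bool) → ℝ) :
    (Fin n → Bool) → ℝ :=
  pDList n (T.sort (· ≤ ·)) f





section Basics
variable {n : ℕ}

lemma Ev_congr {f g : (Fin n → Bool) → ℝ} (h : ∀ x, f x = g x) : Ev n f = Ev n g := by
  unfold Ev; rw [funext h]

lemma Ev_add (f g : (Fin n → Bool) → ℝ) :
    Ev n (fun x => f x + g x) = Ev n f + Ev n g := by
  unfold Ev; rw [Finset.sum_add_distrib, add_div]

lemma Ev_const (c : ℝ) : Ev n (fun _ => c) = c := by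
  unfold Ev
  rw [Finset.sum_const, Finset.card_univ, Fintype.card_fun]
  rw [nsmul_eq_mul, mul_div_assoc]
  field_simp
  rw [Fintype.card_bool, Fintype.card_fin]; push_cast; ring

lemma Ev_zero : Ev n (fun _ => (0:ℝ)) = 0 := by simpa using Ev_const (n := n) 0

lemma Ev_smul (c : ℝ) (f : (Fin n → Bool) → ℝ) :
    Ev n (fun x => c * f x) = c * Ev n f := by
  unfold Ev; rw [← Finset.mul_sum, mul_div_assoc]

lemma Ev_nonneg {f : (Fin n → Bool) → ℝ} (h : ∀ x, 0 ≤ f x) : 0 ≤ Ev n f := by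
  unfold Ev
  exact div_nonneg (Finset.sum_nonneg fun x _ => h x) (by positivity)

lemma Ev_mono {f g : (Fin n → Bool) → ℝ} (h : ∀ x, f x ≤ g x) : Ev n f ≤ Ev n g := by
  unfold Ev
  exact div_le_div_of_nonneg_right (Finset.sum_le_sum fun x _ => h x) (by positivity) |>.trans_eq rfl

lemma abs_Ev_le {f : (Fin n → Bool) → ℝ} : |Ev n f| ≤ Ev n (fun x => |f x|) := by
  unfold Ev
  rw [abs_div, abs_of_nonneg (by positivity : (0:ℝ) ≤ 2^n)]
  exact div_le_div_of_nonneg_right (Finset.abs_sum_le_sum_abs _ _) (by positivity) |>.trans_eq rfl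

/-- flip involution -/
lemma sum_flip (i : Fin n) (F : (Fin n → Bool) → ℝ) :
    ∑ x : Fin n → Bool, F x = ∑ x : Fin n → Bool, F (Function.update x i (! x i)) := by
  have hinv : Function.Involutive (fun x : Fin n → Bool => Function.update x i (! x i)) := by
    intro x
    simp only [Function.update_self, Function.update_idem, Bool.not_not,
      Function.update_eq_self]
  exact (Fintype.sum_equiv hinv.toPerm _ _ (fun x => rfl)).symm

lemma pair_eq (i : Fin n) (F : (Fin n → Bool) → ℝ) (x : Fin n → Bool) :
    F x + F (Function.update x i (! x i))
      = F (Function.update x i false) + F (Function.update x i true) := by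
  cases hx : x i
  · have h1 : Function.update x i false = x := by rw [← hx]; exact Function.update_eq_self i x
    rw [h1]; simp
  · have h1 : Function.update x i true = x := by rw [← hx]; exact Function.update_eq_self i x
    rw [h1]; simp [add_comm]

lemma Ev_avg (i : Fin n) (F : (Fin n → Bool) → ℝ) :
    Ev n F = Ev n (fun x => (F (Function.update x i false) + F (Function.update x i true)) / 2) := by
  unfold Ev
  have : (2:ℝ) * ∑ x : Fin n → Bool, F x
      = ∑ x : Fin n → Bool, (F (Function.update x i false) + F (Function.update x i true)) := by
    rw [two_mul]
    nth_rewrite 2 [sum_flip i F]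
    rw [← Finset.sum_add_distrib]
    exact Finset.sum_congr rfl fun x _ => pair_eq i F x
  have h2 : ∑ x : Fin n → Bool, (F (Function.update x i false) + F (Function.update x i true)) / 2
      = (∑ x : Fin n → Bool, (F (Function.update x i false) + F (Function.update x i true))) / 2 := by
    rw [Finset.sum_div]
  rw [h2, ← this]
  ring

lemma chi_update_not_mem {S : Finset (Fin n)} {i : Fin n} (h : i ∉ S) (x : Fin n → Bool) (b : Bool) :
    chi n S (Function.update x i b) = chi n S x := by
  unfold chi
  exact Finset.prod_congr rfl fun j hj => by
    rw [Function.update_of_ne (by rintro rfl; exact h hj) _ _]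

lemma chi_insert {S : Finset (Fin n)} {i : Fin n} (h : i ∉ S) (x : Fin n → Bool) :
    chi n (insert i S) x = (if x i then (-1:ℝ) else 1) * chi n S x := by
  unfold chi
  exact Finset.prod_insert h

lemma chi_empty (x : Fin n → Bool) : chi n (∅ : Finset (Fin n)) x = 1 := Finset.prod_empty

end Basics

section Fourier
variable {n : ℕ}

lemma chi_flip {S : Finset (Fin n)} {i : Fin n} (h : i ∈ S) (x : Fin n → Bool) :
    chi n S (Function.update x i true) = - chi n S (Function.update x i false) := by
  have hS : S = insert i (S.erase i) := (Finset.insert_erase h).symm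
  have hni : i ∉ S.erase i := Finset.notMem_erase i S
  rw [hS, chi_insert hni, chi_insert hni,
    chi_update_not_mem hni, chi_update_not_mem hni]
  simp

lemma Ev_chi (S : Finset (Fin n)) : Ev n (chi n S) = if S = ∅ then 1 else 0 := by
  rcases eq_or_ne S ∅ with rfl | hS
  · rw [Ev_congr (g := fun _ => (1:ℝ)) chi_empty, Ev_const]
    simp
  · rw [if_neg hS]
    obtain ⟨i, hi⟩ := Finset.nonempty_iff_ne_empty.2 hS
    rw [Ev_avg i (chi n S)]
    have : ∀ x, (chi n S (Function.update x i false) + chi n S (Function.update x i true)) / 2 = 0 := by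
      intro x; rw [chi_flip hi]; ring
    rw [Ev_congr this, Ev_const]

lemma chi_sq (S : Finset (Fin n)) (x : Fin n → Bool) : chi n S x * chi n S x = 1 := by
  unfold chi
  rw [← Finset.prod_mul_distrib]
  exact Finset.prod_eq_one fun i _ => by by_cases h : x i <;> simp [h]

lemma chi_mul_chi (S T : Finset (Fin n)) (x : Fin n → Bool) :
    chi n S x * chi n T x = chi n (symmDiff S T) x := by
  unfold chi
  rw [← Finset.prod_inter_mul_prod_diff S T, ← Finset.prod_inter_mul_prod_diff T S,
    Finset.inter_comm T S]
  have hsd : symmDiff S T = (S \ T) ∪ (T \ S) := by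
    rw [symmDiff_def, Finset.sup_eq_union]
  rw [hsd, Finset.prod_union (disjoint_sdiff_sdiff)]
  have h1 := chi_sq (S ∩ T) x
  unfold chi at h1
  linear_combination ((∏ i ∈ S \ T, (if x i then (-1:ℝ) else 1)) *
    (∏ i ∈ T \ S, (if x i then (-1:ℝ) else 1))) * h1

lemma Ev_chi_mul_chi (S T : Finset (Fin n)) :
    Ev n (fun x => chi n S x * chi n T x) = if S = T then 1 else 0 := by
  rw [Ev_congr (chi_mul_chi S T), Ev_chi]
  rcases eq_or_ne S T with rfl | h
  · simp [symmDiff_self, Finset.bot_eq_empty]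
  · have hne : symmDiff S T ≠ ∅ := by
      rw [← Finset.bot_eq_empty]
      exact fun hc => h (symmDiff_eq_bot.mp hc)
    rw [if_neg hne, if_neg h]

lemma fhat_sum_chi (c : Finset (Fin n) → ℝ) (s : Finset (Finset (Fin n))) (T : Finset (Fin n)) :
    fhat n (fun x => ∑ S ∈ s, c S * chi n S x) T = if T ∈ s then c T else 0 := by
  unfold fhat
  have h1 : ∀ x, (∑ S ∈ s, c S * chi n S x) * chi n T x
      = ∑ S ∈ s, c S * (chi n S x * chi n T x) := by
    intro x; rw [Finset.sum_mul]; exact Finset.sum_congr rfl fun S _ => by ring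
  rw [Ev_congr h1]
  have hev : Ev n (fun x => ∑ S ∈ s, c S * (chi n S x * chi n T x))
      = ∑ S ∈ s, c S * Ev n (fun x => chi n S x * chi n T x) := by
    unfold Ev
    rw [Finset.sum_comm, Finset.sum_div]
    exact Finset.sum_congr rfl fun S _ => by rw [← Finset.mul_sum, mul_div_assoc]
  rw [hev, Finset.sum_congr rfl (fun S _ => by rw [Ev_chi_mul_chi])]
  simp only [mul_ite, mul_one, mul_zero]
  exact Finset.sum_ite_eq' s T c

lemma sum_chi_chi (x y : Fin n → Bool) :
    ∑ S : Finset (Fin n), chi n S x * chi n S y = if x = y then (2:ℝ)^n else 0 := by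
  have hpt : ∀ S : Finset (Fin n), chi n S x * chi n S y
      = ∏ i ∈ S, ((if x i then (-1:ℝ) else 1) * (if y i then (-1:ℝ) else 1)) := by
    intro S; unfold chi; rw [← Finset.prod_mul_distrib]
  have hsum : ∑ S : Finset (Fin n), chi n S x * chi n S y
      = ∏ i : Fin n, (((if x i then (-1:ℝ) else 1) * (if y i then (-1:ℝ) else 1)) + 1) := by
    rw [Finset.prod_add]
    simp only [Finset.prod_const_one, mul_one, Finset.powerset_univ]
    exact Finset.sum_congr rfl fun S _ => hpt S
  rw [hsum]
  by_cases hxy : x = y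
  · subst hxy
    rw [if_pos rfl]
    rw [Finset.prod_congr rfl (fun i _ => by
      by_cases h : x i <;> simp [h] <;> norm_num :
      ∀ i ∈ Finset.univ, (((if x i then (-1:ℝ) else 1) * (if x i then (-1:ℝ) else 1)) + 1) = 2)]
    simp [Finset.prod_const]
  · rw [if_neg hxy]
    obtain ⟨i, hi⟩ : ∃ i, x i ≠ y i := by
      by_contra h; push_neg at h; exact hxy (funext h)
    apply Finset.prod_eq_zero (Finset.mem_univ i)
    rcases Bool.eq_false_or_eq_true (x i) with h1 | h1 <;>
      rcases Bool.eq_false_or_eq_true (y i) with h2 | h2 <;>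
      simp [h1, h2] at hi ⊢ <;> norm_num

lemma parseval (f g : (Fin n → Bool) → ℝ) :
    ∑ S : Finset (Fin n), fhat n f S * fhat n g S = Ev n (fun x => f x * g x) := by
  have h2n : ((2:ℝ)^n) ≠ 0 := by positivity
  have key : ∑ S : Finset (Fin n),
      (∑ x : Fin n → Bool, f x * chi n S x) * (∑ y : Fin n → Bool, g y * chi n S y)
      = (2:ℝ)^n * ∑ x : Fin n → Bool, f x * g x := by
    have h1 : ∀ S : Finset (Fin n),
        (∑ x : Fin n → Bool, f x * chi n S x) * (∑ y : Fin n → Bool, g y * chi n S y)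
        = ∑ x : Fin n → Bool, ∑ y : Fin n → Bool, (f x * g y) * (chi n S x * chi n S y) := by
      intro S
      rw [Finset.sum_mul_sum]
      exact Finset.sum_congr rfl fun x _ => Finset.sum_congr rfl fun y _ => by ring
    rw [Finset.sum_congr rfl fun S _ => h1 S, Finset.sum_comm]
    have h2 : ∀ x : Fin n → Bool,
        ∑ S : Finset (Fin n), ∑ y : Fin n → Bool, (f x * g y) * (chi n S x * chi n S y)
        = ∑ y : Fin n → Bool, (f x * g y) * (if x = y then (2:ℝ)^n else 0) := by
      intro x
      rw [Finset.sum_comm]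
      exact Finset.sum_congr rfl fun y _ => by rw [← Finset.mul_sum, sum_chi_chi]
    rw [Finset.sum_congr rfl fun x _ => h2 x]
    rw [Finset.mul_sum]
    refine Finset.sum_congr rfl fun x _ => ?_
    simp only [mul_ite, mul_zero]
    rw [Finset.sum_ite_eq (Finset.univ : Finset (Fin n → Bool)) x
      (fun y => f x * g y * 2^n)]
    simp [Finset.mem_univ]
    ring
  unfold fhat Ev
  simp only
  rw [Finset.sum_congr rfl (fun S _ => div_mul_div_comm
      (∑ x : Fin n → Bool, f x * chi n S x) ((2:ℝ)^n)
      (∑ y : Fin n → Bool, g y * chi n S y) ((2:ℝ)^n)),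
    ← Finset.sum_div, key, mul_div_assoc]
  rw [div_mul_eq_div_div, mul_div_assoc']
  rw [mul_comm ((2:ℝ)^n) _, mul_div_assoc, div_self h2n, mul_one]

lemma plancherel (f : (Fin n → Bool) → ℝ) :
    ∑ S : Finset (Fin n), (fhat n f S)^2 = Ev n (fun x => (f x)^2) := by
  have := parseval f f
  simpa [sq] using this

lemma inversion (f : (Fin n → Bool) → ℝ) (x : Fin n → Bool) :
    ∑ S : Finset (Fin n), fhat n f S * chi n S x = f x := by
  have h2n : ((2:ℝ)^n) ≠ 0 := by positivity
  unfold fhat Ev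
  simp only
  rw [Finset.sum_congr rfl (fun S _ => div_mul_eq_mul_div _ _ _), ← Finset.sum_div]
  rw [div_eq_iff h2n]
  have : ∀ S : Finset (Fin n), (∑ y : Fin n → Bool, f y * chi n S y) * chi n S x
      = ∑ y : Fin n → Bool, f y * (chi n S y * chi n S x) := by
    intro S; rw [Finset.sum_mul]; exact Finset.sum_congr rfl fun y _ => by ring
  rw [Finset.sum_congr rfl fun S _ => this S, Finset.sum_comm]
  have h2 : ∀ y : Fin n → Bool, ∑ S : Finset (Fin n), f y * (chi n S y * chi n S x)
      = f y * (if y = x then (2:ℝ)^n else 0) := by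
    intro y; rw [← Finset.mul_sum, sum_chi_chi]
  rw [Finset.sum_congr rfl fun y _ => h2 y]
  simp only [mul_ite, mul_zero]
  rw [Finset.sum_ite_eq' (Finset.univ : Finset (Fin n → Bool)) x (fun y => f y * 2^n)]
  simp [mul_comm]

end Fourier

section Deriv
variable {n : ℕ}

lemma fhat_empty (f : (Fin n → Bool) → ℝ) : fhat n f ∅ = Ev n f := by
  unfold fhat
  exact Ev_congr fun x => by rw [chi_empty, mul_one]

/-- mean-zero for functions independent of coordinate i against chi with i ∈ S -/
lemma Ev_indep_mul_chi {k : (Fin n → Bool) → ℝ} {i : Fin n} {S : Finset (Fin n)}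
    (hk : ∀ x b, k (Function.update x i b) = k x) (hi : i ∈ S) :
    Ev n (fun x => k x * chi n S x) = 0 := by
  rw [Ev_avg i]
  have : ∀ x : Fin n → Bool,
      (k (Function.update x i false) * chi n S (Function.update x i false) +
        k (Function.update x i true) * chi n S (Function.update x i true)) / 2 = 0 := by
    intro x
    rw [hk, hk, chi_flip hi]
    ring
  rw [Ev_congr this, Ev_const]

lemma pD_update (f : (Fin n → Bool) → ℝ) (i : Fin n) (x : Fin n → Bool) (b : Bool) :
    pD n i f (Function.update x i b) = pD n i f x := by
  unfold pD
  rw [Function.update_idem, Function.update_idem]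

lemma fhat_pD (f : (Fin n → Bool) → ℝ) (i : Fin n) (S : Finset (Fin n)) :
    fhat n (pD n i f) S = if i ∈ S then 0 else -2 * fhat n f (insert i S) := by
  by_cases hi : i ∈ S
  · rw [if_pos hi]
    exact Ev_indep_mul_chi (fun x b => pD_update f i x b) hi
  · rw [if_neg hi]
    unfold fhat
    rw [Ev_avg i (fun x => f x * chi n (insert i S) x)]
    have key : ∀ x : Fin n → Bool,
        (f (Function.update x i false) * chi n (insert i S) (Function.update x i false) +
          f (Function.update x i true) * chi n (insert i S) (Function.update x i true)) / 2
        = (-1/2) * (pD n i f x * chi n S x) := by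
      intro x
      rw [chi_insert hi, chi_insert hi, chi_update_not_mem hi, chi_update_not_mem hi,
        Function.update_self, Function.update_self]
      unfold pD
      norm_num
      ring
    rw [Ev_congr key, Ev_smul]
    ring

lemma fhat_pD_pD (f : (Fin n → Bool) → ℝ) {i j : Fin n} (hij : i ≠ j) (S : Finset (Fin n)) :
    fhat n (pD n i (pD n j f)) S
      = if i ∈ S ∨ j ∈ S then 0 else 4 * fhat n f (insert i (insert j S)) := by
  rw [fhat_pD]
  by_cases hi : i ∈ S
  · rw [if_pos hi, if_pos (Or.inl hi)]
  · rw [if_neg hi, fhat_pD]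
    by_cases hj : j ∈ S
    · rw [if_pos (by simp [Finset.mem_insert, hj] : j ∈ insert i S), if_pos (Or.inr hj)]
      ring
    · have hj' : j ∉ insert i S := by
        simp only [Finset.mem_insert]
        push_neg
        exact ⟨fun h => hij h.symm, hj⟩
      rw [if_neg hj', if_neg (by tauto)]
      rw [Finset.insert_comm]
      ring

lemma pD_nonneg {f : (Fin n → Bool) → ℝ} (hf : Increasing' n f) (i : Fin n) (x : Fin n → Bool) :
    0 ≤ pD n i f x := by
  unfold pD
  rw [sub_nonneg]
  apply hf
  intro k
  by_cases hk : k = i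
  · subst hk; simp
  · rw [Function.update_of_ne hk, Function.update_of_ne hk]

lemma Inf1_eq {f : (Fin n → Bool) → ℝ} (hf : Increasing' n f) (i : Fin n) :
    Inf1 n i f = -2 * fhat n f {i} := by
  have h1 : Inf1 n i f = Ev n (pD n i f) := by
    unfold Inf1
    exact Ev_congr fun x => abs_of_nonneg (pD_nonneg hf i x)
  have h2 := fhat_pD f i ∅
  rw [if_neg (Finset.notMem_empty i), fhat_empty] at h2
  rw [h1, h2]
  rfl

end Deriv

section Bonami
variable {n : ℕ}

lemma eq_zero_of_fhat_zero {h : (Fin n → Bool) → ℝ} (hz : ∀ S, fhat n h S = 0) (x : Fin n → Bool) :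
    h x = 0 := by
  rw [← inversion h x]
  simp [hz]

lemma bonami (T : Finset (Fin n)) :
    ∀ (D : ℕ) (h : (Fin n → Bool) → ℝ),
      (∀ S, fhat n h S ≠ 0 → S ⊆ T ∧ S.card ≤ D) →
      Ev n (fun x => (h x)^4) ≤ 9^D * (Ev n (fun x => (h x)^2))^2 := by
  induction T using Finset.induction_on with
  | empty =>
      intro D h hsupp
      have hc : ∀ x, h x = fhat n h ∅ := by
        intro x
        rw [← inversion h x]
        rw [Finset.sum_eq_single ∅ (fun S _ hS => by
          by_cases hz : fhat n h S = 0
          · rw [hz]; ring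
          · exact absurd (Finset.subset_empty.mp (hsupp S hz).1) hS) (fun hS => absurd (Finset.mem_univ ∅) hS)]
        rw [chi_empty, mul_one]
      set c := fhat n h ∅
      rw [Ev_congr (fun x => by rw [hc x] : ∀ x, (h x)^4 = c^4),
        Ev_congr (fun x => by rw [hc x] : ∀ x, (h x)^2 = c^2), Ev_const, Ev_const]
      have h9 : (1:ℝ) ≤ 9^D := one_le_pow₀ (by norm_num)
      nlinarith [sq_nonneg (c^2)]
  | @insert i T' hiT ih =>
      intro D h hsupp
      set a : (Fin n → Bool) → ℝ :=
        fun x => (h (Function.update x i false) + h (Function.update x i true))/2 with ha_def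
      set b : (Fin n → Bool) → ℝ :=
        fun x => (h (Function.update x i false) - h (Function.update x i true))/2 with hb_def
      have ha_upd : ∀ (x : Fin n → Bool) (c : Bool), a (Function.update x i c) = a x := by
        intro x c; simp only [ha_def, Function.update_idem]
      have hb_upd : ∀ (x : Fin n → Bool) (c : Bool), b (Function.update x i c) = b x := by
        intro x c; simp only [hb_def, Function.update_idem]
      have fhat_a : ∀ S, fhat n a S = if i ∈ S then 0 else fhat n h S := by
        intro S
        by_cases hiS : i ∈ S
        · rw [if_pos hiS]; exact Ev_indep_mul_chi ha_upd hiS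
        · rw [if_neg hiS]
          unfold fhat
          rw [Ev_avg i (fun x => h x * chi n S x)]
          refine Ev_congr fun x => ?_
          simp only [ha_def]
          rw [chi_update_not_mem hiS, chi_update_not_mem hiS]
          ring
      have fhat_b : ∀ S, fhat n b S = if i ∈ S then 0 else fhat n h (insert i S) := by
        intro S
        by_cases hiS : i ∈ S
        · rw [if_pos hiS]; exact Ev_indep_mul_chi hb_upd hiS
        · rw [if_neg hiS]
          unfold fhat
          rw [Ev_avg i (fun x => h x * chi n (insert i S) x)]
          refine (Ev_congr fun x => ?_).symm
          simp only [hb_def]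
          rw [chi_insert hiS, chi_insert hiS, chi_update_not_mem hiS, chi_update_not_mem hiS,
            Function.update_self, Function.update_self]
          norm_num
          ring
      have hsa : ∀ S, fhat n a S ≠ 0 → S ⊆ T' ∧ S.card ≤ D := by
        intro S hne
        rw [fhat_a] at hne
        by_cases hiS : i ∈ S
        · rw [if_pos hiS] at hne; exact absurd rfl hne
        · rw [if_neg hiS] at hne
          obtain ⟨h1, h2⟩ := hsupp S hne
          exact ⟨(Finset.subset_insert_iff_of_notMem hiS).mp h1, h2⟩
      have hsq : Ev n (fun x => (h x)^2)
          = Ev n (fun x => (a x)^2) + Ev n (fun x => (b x)^2) := by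
        rw [Ev_avg i (fun x => (h x)^2), ← Ev_add]
        refine Ev_congr fun x => ?_
        simp only [ha_def, hb_def]
        ring
      have hquart : Ev n (fun x => (h x)^4)
          = Ev n (fun x => (a x)^4) + 6 * Ev n (fun x => (a x)^2 * (b x)^2)
            + Ev n (fun x => (b x)^4) := by
        have h1 : Ev n (fun x => (h x)^4)
            = Ev n (fun x => ((a x)^4 + 6 * ((a x)^2 * (b x)^2)) + (b x)^4) := by
          rw [Ev_avg i (fun x => (h x)^4)]
          refine Ev_congr fun x => ?_
          simp only [ha_def, hb_def]
          ring
        rw [h1, Ev_add, Ev_add, Ev_smul]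
      have hX : 0 ≤ Ev n (fun x => (a x)^2) := Ev_nonneg fun x => sq_nonneg _
      have hY : 0 ≤ Ev n (fun x => (b x)^2) := Ev_nonneg fun x => sq_nonneg _
      have hCS : (Ev n (fun x => (a x)^2 * (b x)^2))^2
          ≤ Ev n (fun x => (a x)^4) * Ev n (fun x => (b x)^4) := by
        have key : (∑ x : Fin n → Bool, (a x)^2 * (b x)^2)^2
            ≤ (∑ x : Fin n → Bool, (a x)^4) * (∑ x : Fin n → Bool, (b x)^4) := by
          have hh := Finset.sum_mul_sq_le_sq_mul_sq Finset.univ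
            (fun x : Fin n → Bool => (a x)^2) (fun x : Fin n → Bool => (b x)^2)
          calc (∑ x : Fin n → Bool, (a x)^2 * (b x)^2)^2
              ≤ (∑ x : Fin n → Bool, ((a x)^2)^2) * (∑ x : Fin n → Bool, ((b x)^2)^2) := hh
            _ = (∑ x : Fin n → Bool, (a x)^4) * (∑ x : Fin n → Bool, (b x)^4) := by
                rw [Finset.sum_congr rfl (fun x _ => by ring :
                    ∀ x ∈ Finset.univ, ((a x)^2)^2 = (a x)^4),
                  Finset.sum_congr rfl (fun x _ => by ring :
                    ∀ x ∈ Finset.univ, ((b x)^2)^2 = (b x)^4)]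
        unfold Ev
        simp only
        rw [div_pow, div_mul_div_comm, show ((2:ℝ)^n * 2^n) = ((2:ℝ)^n)^2 by ring]
        gcongr
      have hE : 0 ≤ Ev n (fun x => (a x)^2 * (b x)^2) :=
        Ev_nonneg fun x => mul_nonneg (sq_nonneg _) (sq_nonneg _)
      have hP : 0 ≤ Ev n (fun x => (a x)^4) := Ev_nonneg fun x => by positivity
      have hQ : 0 ≤ Ev n (fun x => (b x)^4) := Ev_nonneg fun x => by positivity
      rcases D with _ | D'
      · -- D = 0 : b = 0
        have hb0 : ∀ x, b x = 0 := by
          refine eq_zero_of_fhat_zero (fun S => ?_)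
          rw [fhat_b]
          by_cases hiS : i ∈ S
          · rw [if_pos hiS]
          · rw [if_neg hiS]
            by_contra hne
            have := (hsupp _ hne).2
            rw [Finset.card_insert_of_notMem hiS] at this
            omega
        have hba : ∀ x, h x = a x := by
          intro x
          have h0 := hb0 x
          simp only [hb_def] at h0
          have h1 : h (Function.update x i false) = h (Function.update x i true) := by linarith
          simp only [ha_def]
          cases hx : x i
          · have hup : Function.update x i false = x := by
              rw [← hx]; exact Function.update_eq_self i x
            rw [hup] at h1 ⊢
            rw [← h1]; ring
          · have hup : Function.update x i true = x := by
              rw [← hx]; exact Function.update_eq_self i x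
            rw [hup] at h1 ⊢
            rw [h1]; ring
        have e4 : Ev n (fun x => (h x)^4) = Ev n (fun x => (a x)^4) :=
          Ev_congr fun x => by rw [hba x]
        have e2 : Ev n (fun x => (h x)^2) = Ev n (fun x => (a x)^2) :=
          Ev_congr fun x => by rw [hba x]
        rw [e4, e2]
        exact ih 0 a hsa
      · -- D = D' + 1
        have hsb : ∀ S, fhat n b S ≠ 0 → S ⊆ T' ∧ S.card ≤ D' := by
          intro S hne
          rw [fhat_b] at hne
          by_cases hiS : i ∈ S
          · rw [if_pos hiS] at hne; exact absurd rfl hne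
          · rw [if_neg hiS] at hne
            obtain ⟨h1, h2⟩ := hsupp _ hne
            rw [Finset.card_insert_of_notMem hiS] at h2
            constructor
            · intro s hs
              have := h1 (Finset.mem_insert_of_mem hs)
              rcases Finset.mem_insert.mp this with rfl | h
              · exact absurd hs hiS
              · exact h
            · omega
        have Pa := ih (D' + 1) a hsa
        have Pb := ih D' b hsb
        set X := Ev n (fun x => (a x)^2)
        set Y := Ev n (fun x => (b x)^2)
        set M := (9:ℝ)^D' with hM_def
        have hM : (0:ℝ) < M := by positivity
        have h9 : (9:ℝ)^(D'+1) = 9 * M := by rw [hM_def, pow_succ]; ring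
        have hEbound : Ev n (fun x => (a x)^2 * (b x)^2) ≤ 3 * M * X * Y := by
          have h1 : (Ev n (fun x => (a x)^2 * (b x)^2))^2 ≤ (3 * M * X * Y)^2 := by
            calc (Ev n (fun x => (a x)^2 * (b x)^2))^2
                ≤ Ev n (fun x => (a x)^4) * Ev n (fun x => (b x)^4) := hCS
              _ ≤ (9^(D'+1) * X^2) * (9^D' * Y^2) := by
                  apply mul_le_mul Pa Pb hQ (by positivity)
              _ = (3 * M * X * Y)^2 := by rw [h9, hM_def]; ring
          exact le_of_pow_le_pow_left₀ (by norm_num) (by positivity) h1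
        rw [hquart, hsq]
        have hMX2 : 0 ≤ M * Y^2 := by positivity
        nlinarith [Pa, Pb, hEbound, sq_nonneg Y, hM.le, mul_nonneg hX hY, sq_nonneg (X+Y)]

end Bonami

section Level
variable {n : ℕ}

lemma Ev_cauchy (F G : (Fin n → Bool) → ℝ) :
    (Ev n (fun x => F x * G x))^2 ≤ Ev n (fun x => (F x)^2) * Ev n (fun x => (G x)^2) := by
  have key := Finset.sum_mul_sq_le_sq_mul_sq Finset.univ F G
  unfold Ev
  simp only
  rw [div_pow, div_mul_div_comm, show ((2:ℝ)^n * 2^n) = ((2:ℝ)^n)^2 by ring]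
  gcongr

lemma nrm_one_eq (u : (Fin n → Bool) → ℝ) : nrm n 1 u = Ev n (fun x => |u x|) := by
  unfold nrm
  rw [Ev_congr (fun x => Real.rpow_one _)]
  rw [show (1:ℝ)/1 = 1 by norm_num, Real.rpow_one]

lemma nrm_two_eq (u : (Fin n → Bool) → ℝ) :
    nrm n 2 u = Real.sqrt (Ev n (fun x => (u x)^2)) := by
  unfold nrm
  rw [Ev_congr (fun x => by
    rw [show ((2:ℝ)) = ((2:ℕ):ℝ) by norm_num, Real.rpow_natCast, sq_abs] :
    ∀ x, |u x| ^ (2:ℝ) = (u x)^2)]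
  rw [Real.sqrt_eq_rpow]

lemma u_zero_of_Ev_sq_zero {u : (Fin n → Bool) → ℝ} (h : Ev n (fun x => (u x)^2) = 0) :
    ∀ x, u x = 0 := by
  unfold Ev at h
  rw [div_eq_zero_iff] at h
  rcases h with h | h
  · intro x
    have := (Finset.sum_eq_zero_iff_of_nonneg (fun y _ => sq_nonneg (u y))).mp h x
      (Finset.mem_univ x)
    exact pow_eq_zero_iff (by norm_num) |>.mp this
  · exact absurd h (by positivity)

lemma fhat_zero_of_zero {u : (Fin n → Bool) → ℝ} (hu : ∀ x, u x = 0) (S : Finset (Fin n)) :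
    fhat n u S = 0 := by
  unfold fhat
  rw [Ev_congr (fun x => by rw [hu x, zero_mul] : ∀ x, u x * chi n S x = 0), Ev_const]

set_option maxHeartbeats 1000000 in
/-- Level-`d` inequality via Bonami. -/
lemma level_ineq (u : (Fin n → Bool) → ℝ) (d : ℕ) :
    ∑ S ∈ Finset.univ.filter (fun S : Finset (Fin n) => S.card ≤ d), (fhat n u S)^2
      ≤ 3^d * (Real.sqrt (Ev n (fun x => (u x)^2)) * Ev n (fun x => |u x|)) := by
  classical
  set s := Finset.univ.filter (fun S : Finset (Fin n) => S.card ≤ d) with hs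
  set h : (Fin n → Bool) → ℝ := fun x => ∑ S ∈ s, fhat n u S * chi n S x with hh
  set X := ∑ S ∈ s, (fhat n u S)^2 with hX
  have fhat_h : ∀ T, fhat n h T = if T ∈ s then fhat n u T else 0 := fun T =>
    fhat_sum_chi (fhat n u) s T
  have hXuh : X = Ev n (fun x => u x * h x) := by
    rw [← parseval u h]
    rw [Finset.sum_congr rfl (fun T _ => by
      rw [fhat_h T, mul_ite, mul_zero] :
      ∀ T ∈ Finset.univ, fhat n u T * fhat n h T
        = if T ∈ s then fhat n u T * fhat n u T else 0)]
    rw [Finset.sum_ite_mem, Finset.univ_inter, hX]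
    exact Finset.sum_congr rfl fun T _ => sq (fhat n u T)
  have hXh2 : Ev n (fun x => (h x)^2) = X := by
    rw [← plancherel h]
    rw [Finset.sum_congr rfl (fun T _ => by
      rw [fhat_h T, apply_ite (· ^ 2), zero_pow two_ne_zero] :
      ∀ T ∈ Finset.univ, (fhat n h T)^2 = if T ∈ s then (fhat n u T)^2 else 0)]
    rw [Finset.sum_ite_mem, Finset.univ_inter, hX]
  have hXnn : 0 ≤ X := Finset.sum_nonneg fun S _ => sq_nonneg _
  have hbon : Ev n (fun x => (h x)^4) ≤ 9^d * X^2 := by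
    have := bonami (Finset.univ : Finset (Fin n)) d h (fun S hne => by
      constructor
      · exact Finset.subset_univ S
      · rw [fhat_h S] at hne
        by_cases hSs : S ∈ s
        · exact (Finset.mem_filter.mp hSs).2
        · rw [if_neg hSs] at hne; exact absurd rfl hne)
    rw [hXh2] at this
    exact this
  set A2 := Ev n (fun x => (u x)^2) with hA2
  set A1 := Ev n (fun x => |u x|) with hA1
  have hA2nn : 0 ≤ A2 := Ev_nonneg fun x => sq_nonneg _
  have hA1nn : 0 ≤ A1 := Ev_nonneg fun x => abs_nonneg _
  have hRHSnn : 0 ≤ 3^d * (Real.sqrt A2 * A1) := by positivity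
  rcases le_or_gt X 0 with hX0 | hX0
  · linarith
  -- chain
  have c1 : X ≤ Ev n (fun x => |u x| * |h x|) := by
    rw [hXuh]
    exact Ev_mono fun x => by rw [← abs_mul]; exact le_abs_self _
  have c2 : (Ev n (fun x => |u x| * |h x|))^2 ≤ A1 * Ev n (fun x => |u x| * (h x)^2) := by
    have := Ev_cauchy (fun x => Real.sqrt |u x|) (fun x => Real.sqrt |u x| * |h x|)
    have e1 : Ev n (fun x => Real.sqrt |u x| * (Real.sqrt |u x| * |h x|))
        = Ev n (fun x => |u x| * |h x|) := Ev_congr fun x => by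
      rw [← mul_assoc, Real.mul_self_sqrt (abs_nonneg _)]
    have e2 : Ev n (fun x => (Real.sqrt |u x|)^2) = A1 := Ev_congr fun x =>
      Real.sq_sqrt (abs_nonneg _)
    have e3 : Ev n (fun x => (Real.sqrt |u x| * |h x|)^2)
        = Ev n (fun x => |u x| * (h x)^2) := Ev_congr fun x => by
      rw [mul_pow, Real.sq_sqrt (abs_nonneg _), sq_abs]
    rw [e1, e2, e3] at this
    exact this
  have c3 : (Ev n (fun x => |u x| * (h x)^2))^2 ≤ A2 * Ev n (fun x => (h x)^4) := by
    have := Ev_cauchy (fun x => |u x|) (fun x => (h x)^2)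
    have e1 : Ev n (fun x => |u x| * (h x)^2) = Ev n (fun x => |u x| * (h x)^2) := rfl
    have e2 : Ev n (fun x => (|u x|)^2) = A2 := Ev_congr fun x => sq_abs _
    have e3 : Ev n (fun x => ((h x)^2)^2) = Ev n (fun x => (h x)^4) :=
      Ev_congr fun x => by ring
    rw [e2, e3] at this
    exact this
  have hE2nn : 0 ≤ Ev n (fun x => |u x| * (h x)^2) :=
    Ev_nonneg fun x => mul_nonneg (abs_nonneg _) (sq_nonneg _)
  have c4 : Ev n (fun x => |u x| * (h x)^2) ≤ Real.sqrt A2 * (3^d * X) := by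
    have hsq : (Ev n (fun x => |u x| * (h x)^2))^2 ≤ (Real.sqrt A2 * (3^d * X))^2 := by
      calc (Ev n (fun x => |u x| * (h x)^2))^2 ≤ A2 * Ev n (fun x => (h x)^4) := c3
        _ ≤ A2 * (9^d * X^2) := by
            exact mul_le_mul_of_nonneg_left hbon hA2nn
        _ = (Real.sqrt A2 * (3^d * X))^2 := by
            have h9 : ((3:ℝ)^d)^2 = 9^d := by
              rw [← pow_mul, show d*2 = 2*d by ring, pow_mul]
              norm_num
            rw [mul_pow, Real.sq_sqrt hA2nn, mul_pow, h9]
    exact le_of_pow_le_pow_left₀ (by norm_num) (by positivity) hsq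
  have c5 : X^2 ≤ (A1 * (Real.sqrt A2 * 3^d)) * X := by
    calc X^2 ≤ (Ev n (fun x => |u x| * |h x|))^2 := by
          apply pow_le_pow_left₀ hXnn c1
      _ ≤ A1 * Ev n (fun x => |u x| * (h x)^2) := c2
      _ ≤ A1 * (Real.sqrt A2 * (3^d * X)) := mul_le_mul_of_nonneg_left c4 hA1nn
      _ = (A1 * (Real.sqrt A2 * 3^d)) * X := by ring
  have c5' : X * X ≤ (A1 * (Real.sqrt A2 * 3^d)) * X := by rw [← sq]; exact c5
  have c6 : X ≤ A1 * (Real.sqrt A2 * 3^d) := le_of_mul_le_mul_right c5' hX0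
  have heq : A1 * (Real.sqrt A2 * 3^d) = 3^d * (Real.sqrt A2 * A1) := by ring
  linarith [c6]

set_option maxHeartbeats 1000000 in
/-- Key scalar inequality. -/
lemma key_ineq {L : ℝ} (hL : 0 ≤ L) :
    (1 + L) * (3:ℝ)^(Nat.floor (Real.sqrt (1+L))) ≤ 16 * Real.exp (L/2) := by
  set t := Real.sqrt (1+L) with ht
  have ht1 : 1 ≤ t := by
    have h1 := Real.sqrt_le_sqrt (show (1:ℝ) ≤ 1 + L by linarith)
    rw [Real.sqrt_one] at h1
    exact h1
  have ht0 : 0 < t := by linarith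
  have ht2 : t^2 = 1 + L := Real.sq_sqrt (by linarith)
  have hfl : (Nat.floor t : ℝ) ≤ t := Nat.floor_le (by linarith)
  have hlog3 : Real.log 3 ≤ 2 * Real.log 2 := by
    calc Real.log 3 ≤ Real.log 4 := Real.log_le_log (by norm_num) (by norm_num)
      _ = 2 * Real.log 2 := by
          rw [show (4:ℝ) = 2^2 by norm_num, Real.log_pow]
          norm_num
  have hlog3nn : 0 ≤ Real.log 3 := Real.log_nonneg (by norm_num)
  have h3pow : (3:ℝ)^(Nat.floor t) ≤ Real.exp (t * Real.log 3) := by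
    have : (3:ℝ)^(Nat.floor t) = Real.exp ((Nat.floor t : ℝ) * Real.log 3) := by
      rw [Real.exp_nat_mul, Real.exp_log (by norm_num : (0:ℝ) < 3)]
    rw [this]
    exact Real.exp_le_exp.mpr (mul_le_mul_of_nonneg_right hfl hlog3nn)
  have main : t^2 * Real.exp (t * Real.log 3) ≤ 16 * Real.exp (L/2) := by
    have hlhs : 0 < t^2 * Real.exp (t * Real.log 3) := by positivity
    have hrhs : (0:ℝ) < 16 * Real.exp (L/2) := by positivity
    rw [← Real.log_le_log_iff hlhs hrhs]
    rw [Real.log_mul (by positivity) (Real.exp_ne_zero _), Real.log_exp,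
      Real.log_mul (by norm_num) (Real.exp_ne_zero _), Real.log_exp,
      Real.log_pow]
    have hlogt : Real.log t ≤ Real.log 2 + t/2 - 1 := by
      have h1 := Real.log_le_sub_one_of_pos (show (0:ℝ) < t/2 by linarith)
      rw [Real.log_div (by linarith : t ≠ 0) (by norm_num : (2:ℝ) ≠ 0)] at h1
      linarith
    have hlog16 : Real.log 16 = 4 * Real.log 2 := by
      rw [show (16:ℝ) = 2^4 by norm_num, Real.log_pow]
      norm_num
    rw [hlog16]
    have hl2a : Real.log 2 < 0.6931471808 := Real.log_two_lt_d9
    have hl2b : (0.6931471803:ℝ) < Real.log 2 := Real.log_two_gt_d9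
    have hLt : L = t^2 - 1 := by linarith [ht2]
    rw [hLt]
    nlinarith [sq_nonneg (t - (1 + 2*Real.log 2)), mul_le_mul_of_nonneg_right hlog3 ht0.le,
      hlogt, hl2a, hl2b, ht1]
  calc (1 + L) * (3:ℝ)^(Nat.floor t)
      ≤ (1 + L) * Real.exp (t * Real.log 3) := by
        exact mul_le_mul_of_nonneg_left h3pow (by linarith)
    _ = t^2 * Real.exp (t * Real.log 3) := by rw [ht2]
    _ ≤ 16 * Real.exp (L/2) := main

end Level

section Core
variable {n : ℕ}

lemma u_zero_of_Ev_abs_zero {u : (Fin n → Bool) → ℝ} (h : Ev n (fun x => |u x|) = 0) :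
    ∀ x, u x = 0 := by
  unfold Ev at h
  rw [div_eq_zero_iff] at h
  rcases h with h | h
  · intro x
    have := (Finset.sum_eq_zero_iff_of_nonneg (fun y _ => abs_nonneg (u y))).mp h x
      (Finset.mem_univ x)
    exact abs_eq_zero.mp this
  · exact absurd h (by positivity)

set_option maxHeartbeats 1600000 in
lemma core_bound (u v : (Fin n → Bool) → ℝ) :
    |∑ S : Finset (Fin n), fhat n u S * fhat n v S * (2 / (((S.card:ℝ) + 1) * ((S.card:ℝ) + 2)))|
      ≤ 18 * ((nrm n 2 u * nrm n 2 v) /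
          (1 + Real.log ((nrm n 2 u * nrm n 2 v) / (nrm n 1 u * nrm n 1 v)))) := by
  classical
  set A2 := Ev n (fun x => (u x)^2) with hA2d
  set B2 := Ev n (fun x => (v x)^2) with hB2d
  set A1 := Ev n (fun x => |u x|) with hA1d
  set B1 := Ev n (fun x => |v x|) with hB1d
  have na2u : nrm n 2 u = Real.sqrt A2 := nrm_two_eq u
  have na2v : nrm n 2 v = Real.sqrt B2 := nrm_two_eq v
  have na1u : nrm n 1 u = A1 := nrm_one_eq u
  have na1v : nrm n 1 v = B1 := nrm_one_eq v
  have hA2nn : 0 ≤ A2 := Ev_nonneg fun x => sq_nonneg _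
  have hB2nn : 0 ≤ B2 := Ev_nonneg fun x => sq_nonneg _
  have hA1nn : 0 ≤ A1 := Ev_nonneg fun x => abs_nonneg _
  have hB1nn : 0 ≤ B1 := Ev_nonneg fun x => abs_nonneg _
  -- degenerate cases
  by_cases hA2z : A2 = 0
  · have hu0 := u_zero_of_Ev_sq_zero (hA2d ▸ hA2z)
    have hterm : ∀ S : Finset (Fin n),
        fhat n u S * fhat n v S * (2 / (((S.card:ℝ) + 1) * ((S.card:ℝ) + 2))) = 0 := by
      intro S; rw [fhat_zero_of_zero hu0 S]; ring
    rw [Finset.sum_congr rfl fun S _ => hterm S, Finset.sum_const, smul_zero, abs_zero]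
    rw [na2u, hA2z, Real.sqrt_zero, zero_mul, zero_div, mul_zero]
  by_cases hB2z : B2 = 0
  · have hv0 := u_zero_of_Ev_sq_zero (hB2d ▸ hB2z)
    have hterm : ∀ S : Finset (Fin n),
        fhat n u S * fhat n v S * (2 / (((S.card:ℝ) + 1) * ((S.card:ℝ) + 2))) = 0 := by
      intro S; rw [fhat_zero_of_zero hv0 S]; ring
    rw [Finset.sum_congr rfl fun S _ => hterm S, Finset.sum_const, smul_zero, abs_zero]
    rw [na2v, hB2z, Real.sqrt_zero, mul_zero, zero_div, mul_zero]
  -- main case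
  have hA2pos : 0 < A2 := lt_of_le_of_ne hA2nn (Ne.symm hA2z)
  have hB2pos : 0 < B2 := lt_of_le_of_ne hB2nn (Ne.symm hB2z)
  have hA1pos : 0 < A1 := by
    rcases lt_or_eq_of_le hA1nn with h | h
    · exact h
    · exfalso
      have hu0 := u_zero_of_Ev_abs_zero (hA1d ▸ h.symm)
      apply hA2z
      rw [hA2d, Ev_congr (fun x => by rw [hu0 x]; ring : ∀ x, (u x)^2 = 0), Ev_const]
  have hB1pos : 0 < B1 := by
    rcases lt_or_eq_of_le hB1nn with h | h
    · exact h
    · exfalso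
      have hv0 := u_zero_of_Ev_abs_zero (hB1d ▸ h.symm)
      apply hB2z
      rw [hB2d, Ev_congr (fun x => by rw [hv0 x]; ring : ∀ x, (v x)^2 = 0), Ev_const]
  set N2 := Real.sqrt A2 * Real.sqrt B2 with hN2d
  set N1 := A1 * B1 with hN1d
  have hN2pos : 0 < N2 := mul_pos (Real.sqrt_pos.mpr hA2pos) (Real.sqrt_pos.mpr hB2pos)
  have hN1pos : 0 < N1 := mul_pos hA1pos hB1pos
  have hA1le : A1 ≤ Real.sqrt A2 := by
    have hcs := Ev_cauchy (fun x => |u x|) (fun _ => (1:ℝ))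
    rw [Ev_congr (fun x => mul_one _ : ∀ x, |u x| * 1 = |u x|),
      Ev_congr (fun x => sq_abs _ : ∀ x, |u x|^2 = (u x)^2),
      Ev_congr (fun x => one_pow 2 : ∀ _x : Fin n → Bool, ((1:ℝ))^2 = 1), Ev_const, mul_one] at hcs
    calc A1 = Real.sqrt (A1^2) := (Real.sqrt_sq hA1nn).symm
      _ ≤ Real.sqrt A2 := Real.sqrt_le_sqrt hcs
  have hB1le : B1 ≤ Real.sqrt B2 := by
    have hcs := Ev_cauchy (fun x => |v x|) (fun _ => (1:ℝ))
    rw [Ev_congr (fun x => mul_one _ : ∀ x, |v x| * 1 = |v x|),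
      Ev_congr (fun x => sq_abs _ : ∀ x, |v x|^2 = (v x)^2),
      Ev_congr (fun x => one_pow 2 : ∀ _x : Fin n → Bool, ((1:ℝ))^2 = 1), Ev_const, mul_one] at hcs
    calc B1 = Real.sqrt (B1^2) := (Real.sqrt_sq hB1nn).symm
      _ ≤ Real.sqrt B2 := Real.sqrt_le_sqrt hcs
  have hN1leN2 : N1 ≤ N2 := mul_le_mul hA1le hB1le hB1nn (Real.sqrt_nonneg _)
  set L := Real.log (N2 / N1) with hLd
  have hLnn : 0 ≤ L := Real.log_nonneg ((one_le_div hN1pos).mpr hN1leN2)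
  have h1Lpos : 0 < 1 + L := by linarith
  have hexpL : Real.exp L = N2 / N1 := Real.exp_log (div_pos hN2pos hN1pos)
  set d0 := Nat.floor (Real.sqrt (1 + L)) with hd0d
  have hd0lt : 1 + L < ((d0:ℝ) + 1)^2 := by
    have h1 : Real.sqrt (1 + L) < (d0:ℝ) + 1 := Nat.lt_floor_add_one _
    nlinarith [Real.sq_sqrt (by linarith : (0:ℝ) ≤ 1 + L), Real.sqrt_nonneg (1 + L)]
  -- weight bounds
  have hWnn : ∀ S : Finset (Fin n), 0 ≤ 2 / (((S.card:ℝ) + 1) * ((S.card:ℝ) + 2)) := by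
    intro S; positivity
  have hWle1 : ∀ S : Finset (Fin n), 2 / (((S.card:ℝ) + 1) * ((S.card:ℝ) + 2)) ≤ 1 := by
    intro S
    rw [div_le_one (by positivity)]
    have : (0:ℝ) ≤ (S.card:ℝ) := Nat.cast_nonneg _
    nlinarith
  have habs : ∀ S : Finset (Fin n),
      |fhat n u S * fhat n v S * (2 / (((S.card:ℝ) + 1) * ((S.card:ℝ) + 2)))|
        = |fhat n u S| * |fhat n v S| * (2 / (((S.card:ℝ) + 1) * ((S.card:ℝ) + 2))) := by
    intro S
    rw [abs_mul, abs_mul, abs_of_nonneg (hWnn S)]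
  -- full CS
  have hSf : ∑ S : Finset (Fin n), |fhat n u S| * |fhat n v S| ≤ N2 := by
    have hcs := Finset.sum_mul_sq_le_sq_mul_sq Finset.univ
      (fun S : Finset (Fin n) => |fhat n u S|) (fun S : Finset (Fin n) => |fhat n v S|)
    simp only [sq_abs] at hcs
    rw [plancherel u, plancherel v] at hcs
    have h2 : (∑ S : Finset (Fin n), |fhat n u S| * |fhat n v S|)^2 ≤ N2^2 := by
      rw [hN2d, mul_pow, Real.sq_sqrt hA2nn, Real.sq_sqrt hB2nn]
      exact hcs
    exact le_of_pow_le_pow_left₀ (by norm_num) hN2pos.le h2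
  -- low CS
  have hexphalf : Real.sqrt (Real.exp (-L)) = Real.exp (-(L/2)) := by
    rw [show Real.exp (-L) = Real.exp (-(L/2)) * Real.exp (-(L/2)) by
      rw [← Real.exp_add]; ring_nf]
    exact Real.sqrt_mul_self (Real.exp_nonneg _)
  have hN2N1 : N2 * N1 = (N2 * Real.exp (-(L/2)))^2 := by
    have hexpnegL : Real.exp (-L) = N1 / N2 := by
      rw [Real.exp_neg, hexpL]
      rw [inv_div]
    rw [mul_pow, ← hexphalf, Real.sq_sqrt (Real.exp_nonneg _), hexpnegL]
    field_simp
  have hSl : ∑ S ∈ Finset.univ.filter (fun S : Finset (Fin n) => S.card ≤ d0),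
      |fhat n u S| * |fhat n v S| ≤ 3^d0 * (N2 * Real.exp (-(L/2))) := by
    set s := Finset.univ.filter (fun S : Finset (Fin n) => S.card ≤ d0)
    have hcs := Finset.sum_mul_sq_le_sq_mul_sq s
      (fun S : Finset (Fin n) => |fhat n u S|) (fun S : Finset (Fin n) => |fhat n v S|)
    simp only [sq_abs] at hcs
    have hlu := level_ineq u d0
    have hlv := level_ineq v d0
    have hb : (∑ S ∈ s, |fhat n u S| * |fhat n v S|)^2
        ≤ (3^d0 * (N2 * Real.exp (-(L/2))))^2 := by
      calc (∑ S ∈ s, |fhat n u S| * |fhat n v S|)^2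
          ≤ (∑ S ∈ s, (fhat n u S)^2) * (∑ S ∈ s, (fhat n v S)^2) := hcs
        _ ≤ (3^d0 * (Real.sqrt A2 * A1)) * (3^d0 * (Real.sqrt B2 * B1)) := by
            apply mul_le_mul hlu hlv (Finset.sum_nonneg fun S _ => sq_nonneg _) (by positivity)
        _ = (3^d0)^2 * (N2 * N1) := by rw [hN2d, hN1d]; ring
        _ = (3^d0 * (N2 * Real.exp (-(L/2))))^2 := by rw [hN2N1]; ring
    exact le_of_pow_le_pow_left₀ (by norm_num) (by positivity) hb
  -- split the sum
  rw [← Finset.sum_filter_add_sum_filter_not Finset.univ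
    (fun S : Finset (Fin n) => S.card ≤ d0)
    (fun S : Finset (Fin n) => fhat n u S * fhat n v S * (2 / (((S.card:ℝ) + 1) * ((S.card:ℝ) + 2))))]
  have hlow : |∑ S ∈ Finset.univ.filter (fun S : Finset (Fin n) => S.card ≤ d0),
      fhat n u S * fhat n v S * (2 / (((S.card:ℝ) + 1) * ((S.card:ℝ) + 2)))|
      ≤ 3^d0 * (N2 * Real.exp (-(L/2))) := by
    calc |∑ S ∈ Finset.univ.filter (fun S : Finset (Fin n) => S.card ≤ d0),
        fhat n u S * fhat n v S * (2 / (((S.card:ℝ) + 1) * ((S.card:ℝ) + 2)))|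
        ≤ ∑ S ∈ Finset.univ.filter (fun S : Finset (Fin n) => S.card ≤ d0),
          |fhat n u S * fhat n v S * (2 / (((S.card:ℝ) + 1) * ((S.card:ℝ) + 2)))| :=
          Finset.abs_sum_le_sum_abs _ _
      _ ≤ ∑ S ∈ Finset.univ.filter (fun S : Finset (Fin n) => S.card ≤ d0),
          |fhat n u S| * |fhat n v S| := by
          apply Finset.sum_le_sum
          intro S _
          rw [habs S]
          calc |fhat n u S| * |fhat n v S| * (2 / (((S.card:ℝ) + 1) * ((S.card:ℝ) + 2)))
              ≤ |fhat n u S| * |fhat n v S| * 1 := by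
                apply mul_le_mul_of_nonneg_left (hWle1 S)
                  (mul_nonneg (abs_nonneg _) (abs_nonneg _))
            _ = |fhat n u S| * |fhat n v S| := mul_one _
      _ ≤ 3^d0 * (N2 * Real.exp (-(L/2))) := hSl
  have hhigh : |∑ S ∈ Finset.univ.filter (fun S : Finset (Fin n) => ¬ S.card ≤ d0),
      fhat n u S * fhat n v S * (2 / (((S.card:ℝ) + 1) * ((S.card:ℝ) + 2)))|
      ≤ (2 / (1 + L)) * N2 := by
    calc |∑ S ∈ Finset.univ.filter (fun S : Finset (Fin n) => ¬ S.card ≤ d0),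
        fhat n u S * fhat n v S * (2 / (((S.card:ℝ) + 1) * ((S.card:ℝ) + 2)))|
        ≤ ∑ S ∈ Finset.univ.filter (fun S : Finset (Fin n) => ¬ S.card ≤ d0),
          |fhat n u S * fhat n v S * (2 / (((S.card:ℝ) + 1) * ((S.card:ℝ) + 2)))| :=
          Finset.abs_sum_le_sum_abs _ _
      _ ≤ ∑ S ∈ Finset.univ.filter (fun S : Finset (Fin n) => ¬ S.card ≤ d0),
          (2 / (1 + L)) * (|fhat n u S| * |fhat n v S|) := by
          apply Finset.sum_le_sum
          intro S hS
          rw [habs S]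
          have hcard : d0 < S.card := by
            have := Finset.mem_filter.mp hS
            omega
          have hcast : (d0:ℝ) + 1 ≤ (S.card:ℝ) := by exact_mod_cast hcard
          have hWS : 2 / (((S.card:ℝ) + 1) * ((S.card:ℝ) + 2)) ≤ 2 / (1 + L) := by
            apply div_le_div_of_nonneg_left (by norm_num) h1Lpos
            nlinarith [hd0lt, Nat.cast_nonneg (α := ℝ) d0]
          calc |fhat n u S| * |fhat n v S| * (2 / (((S.card:ℝ) + 1) * ((S.card:ℝ) + 2)))
              ≤ |fhat n u S| * |fhat n v S| * (2 / (1 + L)) := by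
                apply mul_le_mul_of_nonneg_left hWS
                  (mul_nonneg (abs_nonneg _) (abs_nonneg _))
            _ = (2 / (1 + L)) * (|fhat n u S| * |fhat n v S|) := by ring
      _ = (2 / (1 + L)) * ∑ S ∈ Finset.univ.filter (fun S : Finset (Fin n) => ¬ S.card ≤ d0),
          (|fhat n u S| * |fhat n v S|) := by rw [Finset.mul_sum]
      _ ≤ (2 / (1 + L)) * N2 := by
          apply mul_le_mul_of_nonneg_left _ (by positivity)
          calc ∑ S ∈ Finset.univ.filter (fun S : Finset (Fin n) => ¬ S.card ≤ d0),
              (|fhat n u S| * |fhat n v S|)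
              ≤ ∑ S : Finset (Fin n), |fhat n u S| * |fhat n v S| :=
                Finset.sum_le_sum_of_subset_of_nonneg (Finset.filter_subset _ _)
                  (fun S _ _ => mul_nonneg (abs_nonneg _) (abs_nonneg _))
            _ ≤ N2 := hSf
  have hkey : 3^d0 * (N2 * Real.exp (-(L/2))) ≤ (16 / (1 + L)) * N2 := by
    have hk := key_ineq hLnn
    rw [← hd0d] at hk
    have hE : (0:ℝ) < Real.exp (L/2) := Real.exp_pos _
    have hEinv : Real.exp (-(L/2)) = (Real.exp (L/2))⁻¹ := by
      rw [← Real.exp_neg]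
    have h2 : (3:ℝ)^d0 * Real.exp (-(L/2)) ≤ 16 / (1 + L) := by
      rw [hEinv, ← div_eq_mul_inv, div_le_div_iff₀ hE h1Lpos]
      nlinarith [hk]
    calc 3^d0 * (N2 * Real.exp (-(L/2))) = (3^d0 * Real.exp (-(L/2))) * N2 := by ring
      _ ≤ (16 / (1 + L)) * N2 := mul_le_mul_of_nonneg_right h2 hN2pos.le
  have htotal : |∑ S ∈ Finset.univ.filter (fun S : Finset (Fin n) => S.card ≤ d0),
      fhat n u S * fhat n v S * (2 / (((S.card:ℝ) + 1) * ((S.card:ℝ) + 2)))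
      + ∑ S ∈ Finset.univ.filter (fun S : Finset (Fin n) => ¬ S.card ≤ d0),
      fhat n u S * fhat n v S * (2 / (((S.card:ℝ) + 1) * ((S.card:ℝ) + 2)))|
      ≤ 18 / (1 + L) * N2 := by
    calc |∑ S ∈ Finset.univ.filter (fun S : Finset (Fin n) => S.card ≤ d0),
        fhat n u S * fhat n v S * (2 / (((S.card:ℝ) + 1) * ((S.card:ℝ) + 2)))
        + ∑ S ∈ Finset.univ.filter (fun S : Finset (Fin n) => ¬ S.card ≤ d0),
        fhat n u S * fhat n v S * (2 / (((S.card:ℝ) + 1) * ((S.card:ℝ) + 2)))|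
        ≤ |∑ S ∈ Finset.univ.filter (fun S : Finset (Fin n) => S.card ≤ d0),
          fhat n u S * fhat n v S * (2 / (((S.card:ℝ) + 1) * ((S.card:ℝ) + 2)))|
          + |∑ S ∈ Finset.univ.filter (fun S : Finset (Fin n) => ¬ S.card ≤ d0),
          fhat n u S * fhat n v S * (2 / (((S.card:ℝ) + 1) * ((S.card:ℝ) + 2)))| := abs_add_le _ _
      _ ≤ 3^d0 * (N2 * Real.exp (-(L/2))) + (2 / (1 + L)) * N2 := add_le_add hlow hhigh
      _ ≤ (16 / (1 + L)) * N2 + (2 / (1 + L)) * N2 := by linarith [hkey]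
      _ = 18 / (1 + L) * N2 := by ring
  calc _ ≤ 18 / (1 + L) * N2 := htotal
    _ = 18 * (N2 / (1 + L)) := by ring
    _ = 18 * ((nrm n 2 u * nrm n 2 v) /
          (1 + Real.log ((nrm n 2 u * nrm n 2 v) / (nrm n 1 u * nrm n 1 v)))) := by
        rw [na2u, na2v, na1u, na1v, ← hN2d, ← hN1d, ← hLd]

end Core

section Decomp
variable {n : ℕ}

set_option maxHeartbeats 1600000 in
lemma pair_value (f g : (Fin n → Bool) → ℝ) {i j : Fin n} (hij : i ≠ j) :
    (∑ S ∈ Finset.univ.filter (fun S : Finset (Fin n) => i ∈ S ∧ j ∈ S),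
        fhat n f S * fhat n g S * (2 / (((S.card:ℝ) - 1) * (S.card:ℝ))))
    = (1/16) * ∑ S : Finset (Fin n),
        fhat n (pD n i (pD n j f)) S * fhat n (pD n i (pD n j g)) S *
          (2 / (((S.card:ℝ) + 1) * ((S.card:ℝ) + 2))) := by
  classical
  set u := pD n i (pD n j f) with hu
  set v := pD n i (pD n j g) with hv
  have hzero : ∀ S ∈ Finset.univ.filter (fun S : Finset (Fin n) => ¬(i ∉ S ∧ j ∉ S)),
      fhat n u S * fhat n v S * (2 / (((S.card:ℝ) + 1) * ((S.card:ℝ) + 2))) = 0 := by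
    intro S hS
    have h := (Finset.mem_filter.mp hS).2
    have hor : i ∈ S ∨ j ∈ S := by tauto
    rw [hu, fhat_pD_pD f hij S, if_pos hor]
    ring
  have hbij : ∑ S' ∈ Finset.univ.filter (fun S : Finset (Fin n) => i ∉ S ∧ j ∉ S),
      (1/16) * (fhat n u S' * fhat n v S' * (2 / (((S'.card:ℝ) + 1) * ((S'.card:ℝ) + 2))))
      = ∑ S ∈ Finset.univ.filter (fun S : Finset (Fin n) => i ∈ S ∧ j ∈ S),
        fhat n f S * fhat n g S * (2 / (((S.card:ℝ) - 1) * (S.card:ℝ))) := by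
    refine Finset.sum_nbij' (i := fun S' => insert i (insert j S'))
      (j := fun S => (S.erase i).erase j) ?_ ?_ ?_ ?_ ?_
    · intro S' _
      simp only [Finset.mem_filter, Finset.mem_univ, true_and]
      exact ⟨Finset.mem_insert_self i _,
        Finset.mem_insert_of_mem (Finset.mem_insert_self j _)⟩
    · intro S _
      simp only [Finset.mem_filter, Finset.mem_univ, true_and]
      constructor
      · intro hmem
        exact Finset.notMem_erase i S (Finset.mem_of_mem_erase hmem)
      · exact Finset.notMem_erase j _
    · intro S' hS'
      simp only [Finset.mem_filter, Finset.mem_univ, true_and] at hS'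
      have hinotin : i ∉ insert j S' := by
        simp only [Finset.mem_insert]
        push_neg
        exact ⟨hij, hS'.1⟩
      show ((insert i (insert j S')).erase i).erase j = S'
      rw [Finset.erase_insert hinotin, Finset.erase_insert hS'.2]
    · intro S hS
      simp only [Finset.mem_filter, Finset.mem_univ, true_and] at hS
      have hjmem : j ∈ S.erase i := Finset.mem_erase.mpr ⟨fun h => hij h.symm, hS.2⟩
      show insert i (insert j ((S.erase i).erase j)) = S
      rw [Finset.insert_erase hjmem, Finset.insert_erase hS.1]
    · intro S' hS'
      simp only [Finset.mem_filter, Finset.mem_univ, true_and] at hS'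
      have hnor : ¬ (i ∈ S' ∨ j ∈ S') := by tauto
      have hfu : fhat n u S' = 4 * fhat n f (insert i (insert j S')) := by
        rw [hu, fhat_pD_pD f hij S', if_neg hnor]
      have hfv : fhat n v S' = 4 * fhat n g (insert i (insert j S')) := by
        rw [hv, fhat_pD_pD g hij S', if_neg hnor]
      have hinotin : i ∉ insert j S' := by
        simp only [Finset.mem_insert]
        push_neg
        exact ⟨hij, hS'.1⟩
      have hcard : (insert i (insert j S')).card = S'.card + 2 := by
        rw [Finset.card_insert_of_notMem hinotin, Finset.card_insert_of_notMem hS'.2]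
      rw [hfu, hfv, hcard]
      push_cast
      have hc : (0:ℝ) ≤ (S'.card : ℝ) := Nat.cast_nonneg _
      have h1 : ((S'.card : ℝ) + 2 - 1) = (S'.card : ℝ) + 1 := by ring
      rw [h1]
      ring
  rw [← Finset.sum_filter_add_sum_filter_not Finset.univ (fun S : Finset (Fin n) => i ∉ S ∧ j ∉ S)
    (fun S => fhat n u S * fhat n v S * (2 / (((S.card:ℝ) + 1) * ((S.card:ℝ) + 2))))]
  rw [Finset.sum_eq_zero hzero, add_zero, Finset.mul_sum]
  exact hbij.symm

/-- counting ordered pairs in S -/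
lemma count_pairs (S : Finset (Fin n)) :
    ∑ i : Fin n, ∑ j ∈ Finset.univ.filter (fun j : Fin n => i < j),
      (if i ∈ S ∧ j ∈ S then (1:ℝ) else 0)
    = (S.card:ℝ) * ((S.card:ℝ) - 1) / 2 := by
  classical
  set G : Fin n → Fin n → ℝ := fun i j => if i ∈ S ∧ j ∈ S then (1:ℝ) else 0 with hG
  have hGsymm : ∀ a b, G a b = G b a := by
    intro a b
    simp only [hG]
    by_cases h1 : a ∈ S <;> by_cases h2 : b ∈ S <;> simp [h1, h2]
  have hT : ∑ i : Fin n, ∑ j ∈ Finset.univ.filter (fun j : Fin n => i < j), G i j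
      = ∑ i : Fin n, ∑ j : Fin n, (if i < j then G i j else 0) := by
    exact Finset.sum_congr rfl fun i _ => (Finset.sum_filter _ _)
  set T := ∑ i : Fin n, ∑ j : Fin n, (if i < j then G i j else 0) with hTd
  have hswap : ∑ i : Fin n, ∑ j : Fin n, (if j < i then G i j else 0) = T := by
    rw [Finset.sum_comm]
    rw [hTd]
    exact Finset.sum_congr rfl fun i _ => Finset.sum_congr rfl fun j _ => by
      rw [hGsymm]
  have hdiag : ∑ i : Fin n, ∑ j : Fin n, (if i = j then G i j else 0) = (S.card:ℝ) := by
    have h1 : ∀ i : Fin n, ∑ j : Fin n, (if i = j then G i j else 0) = G i i := by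
      intro i
      rw [Finset.sum_ite_eq Finset.univ i (fun j => G i j), if_pos (Finset.mem_univ i)]
    rw [Finset.sum_congr rfl fun i _ => h1 i]
    have h2 : ∀ i : Fin n, G i i = if i ∈ S then (1:ℝ) else 0 := by
      intro i; simp only [hG, and_self]
    rw [Finset.sum_congr rfl fun i _ => h2 i, Finset.sum_ite_mem, Finset.univ_inter,
      Finset.sum_const, nsmul_eq_mul, mul_one]
  have htotal : ∑ i : Fin n, ∑ j : Fin n, G i j = (S.card:ℝ)^2 := by
    have h1 : ∀ i j : Fin n, G i j = (if i ∈ S then (1:ℝ) else 0) * (if j ∈ S then (1:ℝ) else 0) := by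
      intro i j
      simp only [hG]
      by_cases h1 : i ∈ S <;> by_cases h2 : j ∈ S <;> simp [h1, h2]
    rw [Finset.sum_congr rfl fun i _ => Finset.sum_congr rfl fun j _ => h1 i j]
    rw [← Finset.sum_mul_sum]
    rw [Finset.sum_ite_mem, Finset.univ_inter, Finset.sum_const, nsmul_eq_mul, mul_one]
    ring
  have hsplit : ∀ i j : Fin n, (if i < j then G i j else 0) + (if j < i then G i j else 0)
      + (if i = j then G i j else 0) = G i j := by
    intro i j
    rcases lt_trichotomy i j with h | h | h
    · rw [if_pos h, if_neg (asymm h), if_neg (ne_of_lt h)]; ring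
    · rw [if_neg (by rw [h]; exact lt_irrefl j), if_neg (by rw [h]; exact lt_irrefl j), if_pos h]
      ring
    · rw [if_neg (asymm h), if_pos h, if_neg (Ne.symm (ne_of_lt h))]; ring
  have hsum : T + T + (S.card:ℝ) = (S.card:ℝ)^2 := by
    rw [show T + T + (S.card:ℝ)
        = (∑ i : Fin n, ∑ j : Fin n, (if i < j then G i j else 0))
          + (∑ i : Fin n, ∑ j : Fin n, (if j < i then G i j else 0))
          + (∑ i : Fin n, ∑ j : Fin n, (if i = j then G i j else 0)) by
      rw [hswap, hdiag]]
    rw [← htotal]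
    rw [← Finset.sum_add_distrib, ← Finset.sum_add_distrib]
    refine Finset.sum_congr rfl fun i _ => ?_
    rw [← Finset.sum_add_distrib, ← Finset.sum_add_distrib]
    exact Finset.sum_congr rfl fun j _ => hsplit i j
  rw [hT]
  linarith [hsum]

end Decomp

section Main
variable {n : ℕ}

set_option maxHeartbeats 1600000 in
lemma global_decomp (f g : (Fin n → Bool) → ℝ) (hf : Increasing' n f) (hg : Increasing' n g) :
    Ev n (fun x => f x * g x) - Ev n f * Ev n g - (1/4) * ∑ i : Fin n, Inf1 n i f * Inf1 n i g
    = ∑ i : Fin n, ∑ j ∈ Finset.univ.filter (fun j : Fin n => i < j),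
        (∑ S ∈ Finset.univ.filter (fun S : Finset (Fin n) => i ∈ S ∧ j ∈ S),
          fhat n f S * fhat n g S * (2 / (((S.card:ℝ) - 1) * (S.card:ℝ)))) := by
  classical
  set C : Finset (Fin n) → ℝ :=
    fun S => fhat n f S * fhat n g S * (2 / (((S.card:ℝ) - 1) * (S.card:ℝ))) with hC
  -- RHS = sum over sets of card ≥ 2
  have hD : ∑ i : Fin n, ∑ j ∈ Finset.univ.filter (fun j : Fin n => i < j),
      (∑ S ∈ Finset.univ.filter (fun S : Finset (Fin n) => i ∈ S ∧ j ∈ S), C S)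
      = ∑ S ∈ Finset.univ.filter (fun S : Finset (Fin n) => 2 ≤ S.card),
          fhat n f S * fhat n g S := by
    have step1 : ∀ (i j : Fin n),
        (∑ S ∈ Finset.univ.filter (fun S : Finset (Fin n) => i ∈ S ∧ j ∈ S), C S)
        = ∑ S : Finset (Fin n), C S * (if i ∈ S ∧ j ∈ S then (1:ℝ) else 0) := by
      intro i j
      rw [Finset.sum_filter]
      exact Finset.sum_congr rfl fun S _ => by
        by_cases h : i ∈ S ∧ j ∈ S <;> simp [h]
    rw [Finset.sum_congr rfl fun i _ => Finset.sum_congr rfl fun j _ => step1 i j]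
    have step2 : ∀ i : Fin n,
        ∑ j ∈ Finset.univ.filter (fun j : Fin n => i < j),
          ∑ S : Finset (Fin n), C S * (if i ∈ S ∧ j ∈ S then (1:ℝ) else 0)
        = ∑ S : Finset (Fin n),
          ∑ j ∈ Finset.univ.filter (fun j : Fin n => i < j),
            C S * (if i ∈ S ∧ j ∈ S then (1:ℝ) else 0) := by
      intro i
      exact Finset.sum_comm
    rw [Finset.sum_congr rfl fun i _ => step2 i, Finset.sum_comm]
    have step3 : ∀ S : Finset (Fin n),
        ∑ i : Fin n, ∑ j ∈ Finset.univ.filter (fun j : Fin n => i < j),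
          C S * (if i ∈ S ∧ j ∈ S then (1:ℝ) else 0)
        = C S * ((S.card:ℝ) * ((S.card:ℝ) - 1) / 2) := by
      intro S
      rw [show ∑ i : Fin n, ∑ j ∈ Finset.univ.filter (fun j : Fin n => i < j),
            C S * (if i ∈ S ∧ j ∈ S then (1:ℝ) else 0)
          = C S * ∑ i : Fin n, ∑ j ∈ Finset.univ.filter (fun j : Fin n => i < j),
            (if i ∈ S ∧ j ∈ S then (1:ℝ) else 0) by
        rw [Finset.mul_sum]
        exact Finset.sum_congr rfl fun i _ => by rw [Finset.mul_sum]]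
      rw [count_pairs S]
    rw [Finset.sum_congr rfl fun S _ => step3 S]
    have step4 : ∀ S : Finset (Fin n),
        C S * ((S.card:ℝ) * ((S.card:ℝ) - 1) / 2)
        = if 2 ≤ S.card then fhat n f S * fhat n g S else 0 := by
      intro S
      by_cases h : 2 ≤ S.card
      · rw [if_pos h, hC]
        have hc2 : (2:ℝ) ≤ (S.card:ℝ) := by exact_mod_cast h
        have hcne : (S.card:ℝ) ≠ 0 := by linarith
        have hcne1 : (S.card:ℝ) - 1 ≠ 0 := by linarith
        field_simp
      · rw [if_neg h]
        have : S.card = 0 ∨ S.card = 1 := by omega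
        rcases this with h0 | h1
        · rw [hC, h0]; norm_num
        · rw [hC, h1]; norm_num
    rw [Finset.sum_congr rfl fun S _ => step4 S, ← Finset.sum_filter]
  rw [hD]
  -- LHS identity
  have hparse : Ev n (fun x => f x * g x) = ∑ S : Finset (Fin n), fhat n f S * fhat n g S :=
    (parseval f g).symm
  have h0 : Ev n f * Ev n g = fhat n f ∅ * fhat n g ∅ := by
    rw [fhat_empty, fhat_empty]
  have h1 : (1/4) * ∑ i : Fin n, Inf1 n i f * Inf1 n i g
      = ∑ i : Fin n, fhat n f {i} * fhat n g {i} := by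
    rw [Finset.mul_sum]
    refine Finset.sum_congr rfl fun i _ => ?_
    rw [Inf1_eq hf i, Inf1_eq hg i]
    ring
  have hset : Finset.univ.filter (fun S : Finset (Fin n) => ¬ 2 ≤ S.card)
      = insert ∅ (Finset.image (fun i : Fin n => ({i} : Finset (Fin n))) Finset.univ) := by
    ext S
    simp only [Finset.mem_filter, Finset.mem_univ, true_and, Finset.mem_insert, Finset.mem_image]
    constructor
    · intro h
      have h01 : S.card = 0 ∨ S.card = 1 := by omega
      rcases h01 with h0 | h1
      · exact Or.inl (Finset.card_eq_zero.mp h0)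
      · obtain ⟨a, ha⟩ := Finset.card_eq_one.mp h1
        exact Or.inr ⟨a, ha.symm⟩
    · rintro (rfl | ⟨a, rfl⟩) <;> simp
  have hsplit : ∑ S : Finset (Fin n), fhat n f S * fhat n g S
      = (∑ S ∈ Finset.univ.filter (fun S : Finset (Fin n) => 2 ≤ S.card),
          fhat n f S * fhat n g S)
        + (fhat n f ∅ * fhat n g ∅ + ∑ i : Fin n, fhat n f {i} * fhat n g {i}) := by
    rw [← Finset.sum_filter_add_sum_filter_not Finset.univ (fun S : Finset (Fin n) => 2 ≤ S.card)
      (fun S => fhat n f S * fhat n g S)]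
    congr 1
    rw [hset, Finset.sum_insert (by simp), Finset.sum_image
      (fun a _ b _ h => Finset.singleton_injective h)]
  rw [hparse, hsplit, h0, h1]
  ring

end Main



/-- Talagrand `L¹`-`L²`-type upper bound on the deviation of the
covariance of increasing functions from its level-1 contribution. (Terms with
`∂_{ij} f ≡ 0` or `∂_{ij} g ≡ 0` vanish: their numerator is `0`.) -/
theorem talagrand_L1_L2_upper_bound (n : ℕ) (f g : (Fin n → Bool) → ℝ)
    (hf : Increasing' n f) (hg : Increasing' n g) :
    |Ev n (fun x => f x * g x) - Ev n f * Ev n g -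
        (1 / 4) * ∑ i : Fin n, Inf1 n i f * Inf1 n i g|
    ≤ (9 / 8) * ∑ i : Fin n, ∑ j ∈ Finset.univ.filter (fun j : Fin n => i < j),
        (nrm n 2 (pD n i (pD n j f)) * nrm n 2 (pD n i (pD n j g))) /
          (1 + Real.log
            ((nrm n 2 (pD n i (pD n j f)) * nrm n 2 (pD n i (pD n j g))) /
             (nrm n 1 (pD n i (pD n j f)) * nrm n 1 (pD n i (pD n j g))))) := by
  classical
  rw [global_decomp f g hf hg]
  refine le_trans (Finset.abs_sum_le_sum_abs _ _) ?_
  rw [Finset.mul_sum]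
  refine Finset.sum_le_sum fun i _ => ?_
  refine le_trans (Finset.abs_sum_le_sum_abs _ _) ?_
  rw [Finset.mul_sum]
  refine Finset.sum_le_sum fun j hj => ?_
  have hij : i < j := by
    have := Finset.mem_filter.mp hj
    simpa using this.2
  rw [pair_value f g (ne_of_lt hij)]
  rw [abs_mul, abs_of_nonneg (by norm_num : (0:ℝ) ≤ 1/16)]
  calc (1/16) * |∑ S : Finset (Fin n),
        fhat n (pD n i (pD n j f)) S * fhat n (pD n i (pD n j g)) S *
          (2 / (((S.card:ℝ) + 1) * ((S.card:ℝ) + 2)))|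
      ≤ (1/16) * (18 * ((nrm n 2 (pD n i (pD n j f)) * nrm n 2 (pD n i (pD n j g))) /
          (1 + Real.log ((nrm n 2 (pD n i (pD n j f)) * nrm n 2 (pD n i (pD n j g))) /
            (nrm n 1 (pD n i (pD n j f)) * nrm n 1 (pD n i (pD n j g))))))) :=
        mul_le_mul_of_nonneg_left (core_bound (pD n i (pD n j f)) (pD n i (pD n j g)))
          (by norm_num)
    _ = (9/8) * ((nrm n 2 (pD n i (pD n j f)) * nrm n 2 (pD n i (pD n j g))) /
          (1 + Real.log ((nrm n 2 (pD n i (pD n j f)) * nrm n 2 (pD n i (pD n j g))) /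
            (nrm n 1 (pD n i (pD n j f)) * nrm n 1 (pD n i (pD n j g)))))) := by ring
end

section
/- For every R ≥ 1, ∫_0^∞ (1 − e^{−t})·e^{−t}·R^{−tanh(t/2)} dt ≤ 9/(1 + log R). -/
open MeasureTheory Real Set Filter Topology

private lemma exp_neg_deriv (t : ℝ) :
    HasDerivAt (fun t : ℝ => Real.exp (-t)) (-Real.exp (-t)) t := by
  exact (hasDerivAt_id' t).neg.exp.congr_deriv (by simp only [Pi.neg_apply] <;> ring)

private lemma tanh_lb {t : ℝ} (ht : 0 ≤ t) :
    (1 - Real.exp (-t)) / 2 ≤ Real.tanh (t / 2) := by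
  have ha : (1:ℝ) ≤ Real.exp (t/2) := Real.one_le_exp (by linarith)
  have ha0 : (0:ℝ) < Real.exp (t/2) := by linarith
  set a := Real.exp (t/2)
  have hneg : Real.exp (-(t/2)) = a⁻¹ := Real.exp_neg _
  have hexp : Real.exp (-t) = a⁻¹ * a⁻¹ := by
    rw [show -t = -(t/2) + -(t/2) by ring, Real.exp_add, hneg]
  rw [Real.tanh_eq_sinh_div_cosh, Real.sinh_eq, Real.cosh_eq, hneg, hexp]
  have hai : a * a⁻¹ = 1 := mul_inv_cancel₀ (ne_of_gt ha0)
  have hai0 : 0 < a⁻¹ := inv_pos.2 ha0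
  show (1 - a⁻¹ * a⁻¹) / 2 ≤ (a - a⁻¹) / 2 / ((a + a⁻¹) / 2)
  rw [div_le_div_iff₀ (by norm_num) (by positivity)]
  nlinarith [sq_nonneg (a - a⁻¹), sq_nonneg (a*a - 1), mul_pos ha0 ha0]

private lemma half_integral :
    ∫ t in Set.Ioi (0:ℝ), (1 - Real.exp (-t)) * Real.exp (-t) = 1/2 := by
  have hderiv : ∀ t ∈ Set.Ioi (0:ℝ),
      HasDerivAt (fun t : ℝ => Real.exp (-(2*t))/2 - Real.exp (-t))
        ((1 - Real.exp (-t)) * Real.exp (-t)) t := by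
    intro t _
    have h2 : HasDerivAt (fun t : ℝ => Real.exp (-(2*t))) (-2 * Real.exp (-(2*t))) t := by
      exact ((hasDerivAt_id' t).const_mul (2:ℝ)).neg.exp.congr_deriv (by simp only [Pi.neg_apply] <;> ring)
    have := (h2.div_const 2).sub (exp_neg_deriv t)
    refine this.congr_deriv ?_
    rw [show -(2*t) = -t + -t by ring, Real.exp_add]
    ring
  have hint : IntegrableOn (fun t : ℝ => (1 - Real.exp (-t)) * Real.exp (-t)) (Set.Ioi 0) := by
    apply Integrable.mono (exp_neg_integrableOn_Ioi 0 one_pos)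
    · exact (Continuous.aestronglyMeasurable (by continuity)).restrict
    · filter_upwards [ae_restrict_mem measurableSet_Ioi] with t ht
      have h1 : Real.exp (-t) ≤ 1 := by
        rw [← Real.exp_zero]; exact Real.exp_le_exp.2 (by simp [le_of_lt ht.out])
      have h0 : (0:ℝ) < Real.exp (-t) := Real.exp_pos _
      rw [Real.norm_eq_abs, Real.norm_eq_abs, abs_of_nonneg (by nlinarith),
        abs_of_nonneg (Real.exp_nonneg _)]
      rw [show -1 * t = -t by ring]
      nlinarith
  have htends : Tendsto (fun t : ℝ => Real.exp (-(2*t))/2 - Real.exp (-t)) atTop (𝓝 0) := by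
    have h1 : Tendsto (fun t : ℝ => Real.exp (-t)) atTop (𝓝 0) :=
      Real.tendsto_exp_neg_atTop_nhds_zero
    have h2 : Tendsto (fun t : ℝ => Real.exp (-(2*t))) atTop (𝓝 0) := by
      apply h1.comp
      exact (tendsto_id.const_mul_atTop two_pos)
    simpa using (h2.div_const 2).sub h1
  have := integral_Ioi_of_hasDerivAt_of_tendsto
    (f := fun t : ℝ => Real.exp (-(2*t))/2 - Real.exp (-t))
    (Continuous.continuousWithinAt (by fun_prop)) (hderiv) hint htends
  rw [this]; norm_num

/-- For every `R ≥ 1`,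
`∫_0^∞ (1 − e^{−t}) e^{−t} R^{−tanh(t/2)} dt ≤ 9/(1 + log R)`. -/
theorem kernel_integral_bound (R : ℝ) (hR : 1 ≤ R) :
    ∫ t in Set.Ioi (0 : ℝ),
        (1 - Real.exp (-t)) * Real.exp (-t) * R ^ (-Real.tanh (t / 2))
      ≤ 9 / (1 + Real.log R) := by
  have hR0 : (0:ℝ) < R := lt_of_lt_of_le one_pos hR
  have hL : 0 ≤ Real.log R := Real.log_nonneg hR
  set L := Real.log R with hLdef
  have hL1 : (0:ℝ) < 1 + L := by linarith
  -- basic facts about the integrand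
  have hexp_le_one : ∀ t ∈ Set.Ioi (0:ℝ), Real.exp (-t) ≤ 1 := by
    intro t ht
    rw [← Real.exp_zero]; exact Real.exp_le_exp.2 (by simp [le_of_lt ht.out])
  have hnonneg : ∀ t ∈ Set.Ioi (0:ℝ),
      0 ≤ (1 - Real.exp (-t)) * Real.exp (-t) * R ^ (-Real.tanh (t / 2)) := by
    intro t ht
    have h1 := hexp_le_one t ht
    have h2 := Real.exp_pos (-t)
    have h3 : (0:ℝ) ≤ R ^ (-Real.tanh (t / 2)) := Real.rpow_nonneg (le_of_lt hR0) _
    exact mul_nonneg (mul_nonneg (by linarith) (le_of_lt h2)) h3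
  have hrpow : ∀ t : ℝ, R ^ (-Real.tanh (t / 2)) = Real.exp (L * (-Real.tanh (t/2))) := by
    intro t
    rw [Real.rpow_def_of_pos hR0]
  by_cases hc : L ≤ 17
  · -- small L: bound by 1/2
    have hbound : ∀ t ∈ Set.Ioi (0:ℝ),
        (1 - Real.exp (-t)) * Real.exp (-t) * R ^ (-Real.tanh (t / 2))
          ≤ (1 - Real.exp (-t)) * Real.exp (-t) := by
      intro t ht
      have h1 : R ^ (-Real.tanh (t / 2)) ≤ 1 := by
        rw [hrpow]
        rw [← Real.exp_zero]
        apply Real.exp_le_exp.2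
        have htanh : 0 ≤ Real.tanh (t/2) := by
          have := tanh_lb (le_of_lt ht.out)
          have := hexp_le_one t ht
          linarith
        nlinarith
      have h2 : 0 ≤ (1 - Real.exp (-t)) * Real.exp (-t) := by
        have := hexp_le_one t ht
        have := Real.exp_pos (-t)
        nlinarith
      nlinarith [Real.rpow_nonneg (le_of_lt hR0) (-Real.tanh (t/2))]
    have hint : IntegrableOn (fun t : ℝ => (1 - Real.exp (-t)) * Real.exp (-t)) (Set.Ioi 0) := by
      apply Integrable.mono (exp_neg_integrableOn_Ioi 0 one_pos)
      · exact (Continuous.aestronglyMeasurable (by fun_prop)).restrict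
      · filter_upwards [ae_restrict_mem measurableSet_Ioi] with t ht
        have h1 := hexp_le_one t ht
        have h0 : (0:ℝ) < Real.exp (-t) := Real.exp_pos _
        rw [Real.norm_eq_abs, Real.norm_eq_abs, abs_of_nonneg (by nlinarith),
          abs_of_nonneg (Real.exp_nonneg _), show -1 * t = -t by ring]
        nlinarith
    calc ∫ t in Set.Ioi (0:ℝ),
          (1 - Real.exp (-t)) * Real.exp (-t) * R ^ (-Real.tanh (t / 2))
        ≤ ∫ t in Set.Ioi (0:ℝ), (1 - Real.exp (-t)) * Real.exp (-t) := by
          apply integral_mono_of_nonneg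
          · filter_upwards [ae_restrict_mem measurableSet_Ioi] with t ht
            exact hnonneg t ht
          · exact hint
          · filter_upwards [ae_restrict_mem measurableSet_Ioi] with t ht
            exact hbound t ht
      _ = 1/2 := half_integral
      _ ≤ 9 / (1 + L) := by
          rw [div_le_div_iff₀ (by norm_num) hL1]
          linarith
  · -- large L
    push_neg at hc
    set c := L / 2 with hcdef
    have hc0 : (0:ℝ) < c := by simp [hcdef]; linarith
    -- the dominating function and its antiderivative
    set g : ℝ → ℝ := fun t =>
      (1 - Real.exp (-t)) * Real.exp (-t) * Real.exp (-(c * (1 - Real.exp (-t)))) with hgdef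
    set F : ℝ → ℝ := fun t =>
      -((c * (1 - Real.exp (-t)) + 1) / c^2) * Real.exp (-(c * (1 - Real.exp (-t)))) with hFdef
    have hderiv : ∀ t ∈ Set.Ioi (0:ℝ), HasDerivAt F (g t) t := by
      intro t _
      have hu : HasDerivAt (fun t : ℝ => 1 - Real.exp (-t)) (Real.exp (-t)) t := by
        simpa using (exp_neg_deriv t).const_sub 1
      have hcu : HasDerivAt (fun t : ℝ => -(c * (1 - Real.exp (-t)))) (-(c * Real.exp (-t))) t :=
        (hu.const_mul c).neg
      have hecu : HasDerivAt (fun t : ℝ => Real.exp (-(c * (1 - Real.exp (-t)))))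
          (Real.exp (-(c * (1 - Real.exp (-t)))) * (-(c * Real.exp (-t)))) t :=
        (Real.hasDerivAt_exp _).comp t hcu
      have hlin : HasDerivAt (fun t : ℝ => -((c * (1 - Real.exp (-t)) + 1) / c^2))
          (-(c * Real.exp (-t) / c^2)) t := by
        have := ((hu.const_mul c).add_const 1).div_const (c^2)
        exact this.neg.congr_deriv (by ring)
      have := hlin.mul hecu
      refine this.congr_deriv ?_
      have hc2 : c^2 ≠ 0 := by positivity
      field_simp [hgdef]
      ring
    have hg_nonneg : ∀ t ∈ Set.Ioi (0:ℝ), 0 ≤ g t := by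
      intro t ht
      have h1 := hexp_le_one t ht
      have h2 := Real.exp_pos (-t)
      have h3 := Real.exp_pos (-(c * (1 - Real.exp (-t))))
      simp only [hgdef]
      exact mul_nonneg (mul_nonneg (by linarith) (le_of_lt h2)) (le_of_lt h3)
    have hgint : IntegrableOn g (Set.Ioi 0) := by
      apply Integrable.mono (exp_neg_integrableOn_Ioi 0 one_pos)
      · exact (Continuous.aestronglyMeasurable (by fun_prop)).restrict
      · filter_upwards [ae_restrict_mem measurableSet_Ioi] with t ht
        have h1 := hexp_le_one t ht
        have h0 : (0:ℝ) < Real.exp (-t) := Real.exp_pos _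
        have h2 : Real.exp (-(c * (1 - Real.exp (-t)))) ≤ 1 := by
          have := Real.exp_le_exp.2 (show -(c * (1 - Real.exp (-t))) ≤ 0 by nlinarith)
          simpa using this
        have h3 : (0:ℝ) < Real.exp (-(c * (1 - Real.exp (-t)))) := Real.exp_pos _
        rw [Real.norm_eq_abs, Real.norm_eq_abs, abs_of_nonneg (hg_nonneg t ht),
          abs_of_nonneg (Real.exp_nonneg _), show -1 * t = -t by ring]
        simp only [hgdef]
        have h4 : (1 - Real.exp (-t)) * Real.exp (-(c * (1 - Real.exp (-t)))) ≤ 1 := by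
          nlinarith
        nlinarith [mul_le_mul_of_nonneg_right h4 (le_of_lt h0)]
    have htends : Tendsto F atTop (𝓝 (-((c + 1) / c^2) * Real.exp (-c))) := by
      have h1 : Tendsto (fun t : ℝ => Real.exp (-t)) atTop (𝓝 0) :=
        Real.tendsto_exp_neg_atTop_nhds_zero
      have hcont : Continuous (fun e : ℝ =>
          -((c * (1 - e) + 1) / c^2) * Real.exp (-(c * (1 - e)))) := by fun_prop
      have := (hcont.tendsto 0).comp h1
      simpa [hFdef, Function.comp_def] using this
    have hFTC := integral_Ioi_of_hasDerivAt_of_tendsto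
      (f := F) (f' := g) (a := 0) (m := -((c + 1) / c^2) * Real.exp (-c))
      (Continuous.continuousWithinAt (by simp only [hFdef]; fun_prop))
      hderiv hgint htends
    have hF0 : F 0 = -(1 / c^2) := by simp [hFdef]
    have hgval : ∫ t in Set.Ioi (0:ℝ), g t ≤ 1 / c^2 := by
      rw [hFTC, hF0]
      have : 0 ≤ ((c + 1) / c^2) * Real.exp (-c) := by positivity
      linarith
    -- pointwise bound
    have hbound : ∀ t ∈ Set.Ioi (0:ℝ),
        (1 - Real.exp (-t)) * Real.exp (-t) * R ^ (-Real.tanh (t / 2)) ≤ g t := by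
      intro t ht
      have h1 : R ^ (-Real.tanh (t / 2)) ≤ Real.exp (-(c * (1 - Real.exp (-t)))) := by
        rw [hrpow]
        apply Real.exp_le_exp.2
        have h5 := mul_le_mul_of_nonneg_left (tanh_lb (le_of_lt ht.out)) hL
        simp only [hcdef]
        nlinarith [h5]
      have h2 : 0 ≤ (1 - Real.exp (-t)) * Real.exp (-t) := by
        have := hexp_le_one t ht
        have := Real.exp_pos (-t)
        nlinarith
      simp only [hgdef]
      nlinarith [Real.rpow_nonneg (le_of_lt hR0) (-Real.tanh (t/2)),
        Real.exp_pos (-(c * (1 - Real.exp (-t))))]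
    calc ∫ t in Set.Ioi (0:ℝ),
          (1 - Real.exp (-t)) * Real.exp (-t) * R ^ (-Real.tanh (t / 2))
        ≤ ∫ t in Set.Ioi (0:ℝ), g t := by
          apply integral_mono_of_nonneg
          · filter_upwards [ae_restrict_mem measurableSet_Ioi] with t ht
            exact hnonneg t ht
          · exact hgint
          · filter_upwards [ae_restrict_mem measurableSet_Ioi] with t ht
            exact hbound t ht
      _ ≤ 1 / c^2 := hgval
      _ ≤ 9 / (1 + L) := by
          rw [div_le_div_iff₀ (by positivity) hL1, hcdef]
          nlinarith
end

section
/- Let f, g : {0,1}^n → ℝ satisfy either ∂_{ij} f ≥ 0 and ∂_{ij} g ≥ 0 pointwise for all i ≠ j, or ∂_{ij} f ≤ 0 and ∂_{ij} g ≤ 0 pointwise for all i ≠ j. Then ∑_{S ⊆ [n], |S| ≥ 2} f̂(S)·ĝ(S) = 0 if and only if for every pair 1 ≤ i < j ≤ n at least one of ∂_{ij} f or ∂_{ij} g is identically zero on {0,1}^n. -/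
open Finset MeasureTheory

namespace L2W
open Finset

variable {n : ℕ}

def sg (b : Bool) : ℝ := if b then -1 else 1

lemma chi_eq (S : Finset (Fin n)) (x : Fin n → Bool) :
    chi n S x = ∏ i ∈ S, sg (x i) := rfl

def flp (i : Fin n) (x : Fin n → Bool) : Fin n → Bool := Function.update x i (!x i)

lemma flp_flp (i : Fin n) (x : Fin n → Bool) : flp i (flp i x) = x := by
  funext j
  rcases eq_or_ne j i with h | h
  · subst h; simp [flp]
  · simp [flp, Function.update_of_ne h]

lemma sum_update (F : (Fin n → Bool) → ℝ) (i : Fin n) (b : Bool) :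
    ∑ x : Fin n → Bool, F (Function.update x i b)
      = ∑ x : Fin n → Bool, F x * (1 + sg b * sg (x i)) := by
  have h1 : ∀ x : Fin n → Bool, F (Function.update x i b)
      = if x i = b then F x else F (flp i x) := by
    intro x
    rcases eq_or_ne (x i) b with h | h
    · rw [if_pos h, ← h, Function.update_eq_self]
    · rw [if_neg h]
      unfold flp
      congr 1
      have hb : b = (!(x i)) := by cases b <;> cases hx : x i <;> simp_all
      rw [hb]
  have h2 : ∀ x : Fin n → Bool, F x * (1 + sg b * sg (x i))
      = if x i = b then 2 * F x else 0 := by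
    intro x
    cases b <;> cases hx : x i <;> simp [sg, hx] <;> ring
  simp only [h1, h2]
  rw [Finset.sum_ite, Finset.sum_ite, Finset.sum_const, smul_zero, add_zero]
  have hbij : ∑ x ∈ filter (fun x => ¬ x i = b) univ, F (flp i x)
      = ∑ x ∈ filter (fun x => x i = b) univ, F x := by
    apply Finset.sum_nbij' (i := fun x => flp i x) (j := fun x => flp i x)
    · intro a ha
      simp only [Finset.mem_filter, Finset.mem_univ, true_and] at ha ⊢
      simp only [flp, Function.update_self]
      cases b <;> cases hx : a i <;> simp_all
    · intro a ha
      simp only [Finset.mem_filter, Finset.mem_univ, true_and] at ha ⊢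
      simp only [flp, Function.update_self]
      cases b <;> cases hx : a i <;> simp_all
    · intro a _; exact flp_flp i a
    · intro a _; exact flp_flp i a
    · intro a _; rfl
  rw [hbij, ← Finset.sum_add_distrib]
  exact Finset.sum_congr rfl fun x _ => by ring

lemma chi_insert {i : Fin n} {S : Finset (Fin n)} (hi : i ∉ S) (x : Fin n → Bool) :
    chi n (insert i S) x = sg (x i) * chi n S x := Finset.prod_insert hi

lemma chi_update {i : Fin n} {S : Finset (Fin n)} (hi : i ∉ S) (x : Fin n → Bool) (b : Bool) :
    chi n S (Function.update x i b) = chi n S x := by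
  unfold chi
  refine Finset.prod_congr rfl fun j hj => ?_
  have hne : j ≠ i := by rintro rfl; exact hi hj
  rw [Function.update_of_ne hne]

lemma sum_mul_chi_eq_zero {F : (Fin n → Bool) → ℝ} {i : Fin n}
    (hind : ∀ x b, F (Function.update x i b) = F x) {S : Finset (Fin n)} (hi : i ∈ S) :
    ∑ x : Fin n → Bool, F x * chi n S x = 0 := by
  have hie : i ∉ S.erase i := Finset.notMem_erase i S
  have hS : insert i (S.erase i) = S := Finset.insert_erase hi
  have key : ∀ x : Fin n → Bool,
      F (flp i x) * chi n S (flp i x) = -(F x * chi n S x) := by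
    intro x
    rw [← hS, chi_insert hie, chi_insert hie]
    have h1 : F (flp i x) = F x := hind x (!x i)
    have h2 : chi n (S.erase i) (flp i x) = chi n (S.erase i) x := chi_update hie x (!x i)
    have h3 : sg (flp i x i) = - sg (x i) := by
      simp only [flp, Function.update_self]
      cases x i <;> simp [sg]
    rw [h1, h2, h3]; ring
  have e : ∑ x : Fin n → Bool, F x * chi n S x
      = ∑ x : Fin n → Bool, F (flp i x) * chi n S (flp i x) := by
    apply Finset.sum_nbij' (i := fun x => flp i x) (j := fun x => flp i x)
    · intro a _; exact Finset.mem_univ _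
    · intro a _; exact Finset.mem_univ _
    · intro a _; exact flp_flp i a
    · intro a _; exact flp_flp i a
    · intro a _; rw [flp_flp]
  have h0 : ∑ x : Fin n → Bool, F (flp i x) * chi n S (flp i x)
      = ∑ x : Fin n → Bool, -(F x * chi n S x) :=
    Finset.sum_congr rfl fun x _ => key x
  have h4 : ∑ x : Fin n → Bool, F x * chi n S x
      = ∑ x : Fin n → Bool, -(F x * chi n S x) := e.trans h0
  have h5 : ∑ x : Fin n → Bool, -(F x * chi n S x)
      = - ∑ x : Fin n → Bool, F x * chi n S x := Finset.sum_neg_distrib _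
  linarith

lemma sum_pD_mul_chi {h : (Fin n → Bool) → ℝ} {i : Fin n} {S : Finset (Fin n)} (hi : i ∉ S) :
    ∑ x : Fin n → Bool, pD n i h x * chi n S x
      = -2 * ∑ x : Fin n → Bool, h x * chi n (insert i S) x := by
  have key : ∀ b : Bool, ∑ x : Fin n → Bool, h (Function.update x i b) * chi n S x
      = ∑ x : Fin n → Bool, h x * chi n S x * (1 + sg b * sg (x i)) := by
    intro b
    calc ∑ x : Fin n → Bool, h (Function.update x i b) * chi n S x
        = ∑ x : Fin n → Bool,
            (fun z => h z * chi n S z) (Function.update x i b) := by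
          refine Finset.sum_congr rfl fun x _ => ?_
          simp only
          rw [chi_update hi]
      _ = ∑ x : Fin n → Bool, h x * chi n S x * (1 + sg b * sg (x i)) := by
          simpa using sum_update (fun z => h z * chi n S z) i b
  unfold pD
  simp only [sub_mul]
  rw [Finset.sum_sub_distrib, key true, key false, ← Finset.sum_sub_distrib,
    Finset.mul_sum]
  refine Finset.sum_congr rfl fun x _ => ?_
  rw [chi_insert hi]
  cases hx : x i <;> simp [sg] <;> ring

lemma pD_indep_self (h : (Fin n → Bool) → ℝ) (i : Fin n) :
    ∀ (x : Fin n → Bool) (b : Bool), pD n i h (Function.update x i b) = pD n i h x := by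
  intro x b
  unfold pD
  rw [Function.update_idem, Function.update_idem]

lemma pD_indep_other {i j : Fin n} (hij : i ≠ j) {h : (Fin n → Bool) → ℝ}
    (hind : ∀ (x : Fin n → Bool) (b : Bool), h (Function.update x j b) = h x) :
    ∀ (x : Fin n → Bool) (b : Bool), pD n i h (Function.update x j b) = pD n i h x := by
  intro x b
  unfold pD
  rw [Function.update_comm (Ne.symm hij), Function.update_comm (Ne.symm hij), hind, hind]

lemma sum_pD2_mul_chi {i j : Fin n} (hij : i ≠ j) (f : (Fin n → Bool) → ℝ)
    {S : Finset (Fin n)} (hi : i ∉ S) (hj : j ∉ S) :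
    ∑ x : Fin n → Bool, pD n i (pD n j f) x * chi n S x
      = 4 * ∑ x : Fin n → Bool, f x * chi n (insert j (insert i S)) x := by
  rw [sum_pD_mul_chi hi]
  have hj' : j ∉ insert i S := by
    simp only [Finset.mem_insert, not_or]
    exact ⟨Ne.symm hij, hj⟩
  rw [sum_pD_mul_chi hj']
  ring

lemma sum_pD2_mul_chi_zero {i j : Fin n} (hij : i ≠ j) (f : (Fin n → Bool) → ℝ)
    {S : Finset (Fin n)} (h : i ∈ S ∨ j ∈ S) :
    ∑ x : Fin n → Bool, pD n i (pD n j f) x * chi n S x = 0 := by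
  rcases h with h | h
  · exact sum_mul_chi_eq_zero (pD_indep_self (pD n j f) i) h
  · exact sum_mul_chi_eq_zero (pD_indep_other hij (pD_indep_self f j)) h

def ker (ρ : ℝ) (x y : Fin n → Bool) : ℝ := ∏ k : Fin n, (1 + ρ * (sg (x k) * sg (y k)))

lemma ker_expand (ρ : ℝ) (x y : Fin n → Bool) :
    ker ρ x y = ∑ S : Finset (Fin n), ρ ^ S.card * (chi n S x * chi n S y) := by
  unfold ker
  have h : ∀ k : Fin n, (1 : ℝ) + ρ * (sg (x k) * sg (y k))
      = ρ * (sg (x k) * sg (y k)) + 1 := fun k => by ring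
  rw [Finset.prod_congr rfl (fun k _ => h k), Finset.prod_add]
  rw [← Finset.powerset_univ]
  refine Finset.sum_congr rfl fun S _ => ?_
  rw [Finset.prod_const_one, mul_one, Finset.prod_mul_distrib, Finset.prod_mul_distrib,
    Finset.prod_const]
  rw [chi_eq, chi_eq]

lemma ker_nonneg {ρ : ℝ} (h0 : 0 ≤ ρ) (h1 : ρ ≤ 1) (x y : Fin n → Bool) :
    0 ≤ ker ρ x y := by
  apply Finset.prod_nonneg
  intro k _
  have : sg (x k) * sg (y k) = 1 ∨ sg (x k) * sg (y k) = -1 := by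
    cases x k <;> cases y k <;> simp [sg]
  rcases this with h | h <;> rw [h] <;> nlinarith

lemma ker_zero (x y : Fin n → Bool) : ker 0 x y = 1 := by
  unfold ker; simp

noncomputable def Sh (f : (Fin n → Bool) → ℝ) (S : Finset (Fin n)) : ℝ :=
  ∑ x : Fin n → Bool, f x * chi n S x

noncomputable def PV (f g : (Fin n → Bool) → ℝ) (i j : Fin n) (ρ : ℝ) : ℝ :=
  ∑ x : Fin n → Bool, ∑ y : Fin n → Bool,
    pD n i (pD n j f) x * pD n i (pD n j g) y * ker ρ x y

lemma PV_fourier (f g : (Fin n → Bool) → ℝ) (i j : Fin n) (ρ : ℝ) :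
    PV f g i j ρ = ∑ S : Finset (Fin n), ρ ^ S.card *
      ((∑ x : Fin n → Bool, pD n i (pD n j f) x * chi n S x) *
       (∑ y : Fin n → Bool, pD n i (pD n j g) y * chi n S y)) := by
  unfold PV
  have step : ∀ S : Finset (Fin n), ρ ^ S.card *
      ((∑ x : Fin n → Bool, pD n i (pD n j f) x * chi n S x) *
       (∑ y : Fin n → Bool, pD n i (pD n j g) y * chi n S y))
      = ∑ x : Fin n → Bool, ∑ y : Fin n → Bool,
          pD n i (pD n j f) x * pD n i (pD n j g) y * (ρ ^ S.card * (chi n S x * chi n S y)) := by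
    intro S
    rw [Finset.sum_mul_sum, Finset.mul_sum]
    refine Finset.sum_congr rfl fun x _ => ?_
    rw [Finset.mul_sum]
    refine Finset.sum_congr rfl fun y _ => ?_
    ring
  calc ∑ x : Fin n → Bool, ∑ y : Fin n → Bool,
          pD n i (pD n j f) x * pD n i (pD n j g) y * ker ρ x y
      = ∑ x : Fin n → Bool, ∑ y : Fin n → Bool, ∑ S : Finset (Fin n),
          pD n i (pD n j f) x * pD n i (pD n j g) y
            * (ρ ^ S.card * (chi n S x * chi n S y)) := by
        refine Finset.sum_congr rfl fun x _ => Finset.sum_congr rfl fun y _ => ?_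
        rw [ker_expand, Finset.mul_sum]
    _ = ∑ x : Fin n → Bool, ∑ S : Finset (Fin n), ∑ y : Fin n → Bool,
          pD n i (pD n j f) x * pD n i (pD n j g) y
            * (ρ ^ S.card * (chi n S x * chi n S y)) :=
        Finset.sum_congr rfl fun x _ => Finset.sum_comm
    _ = ∑ S : Finset (Fin n), ∑ x : Fin n → Bool, ∑ y : Fin n → Bool,
          pD n i (pD n j f) x * pD n i (pD n j g) y
            * (ρ ^ S.card * (chi n S x * chi n S y)) := Finset.sum_comm
    _ = ∑ S : Finset (Fin n), ρ ^ S.card *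
          ((∑ x : Fin n → Bool, pD n i (pD n j f) x * chi n S x) *
           (∑ y : Fin n → Bool, pD n i (pD n j g) y * chi n S y)) :=
        Finset.sum_congr rfl fun S _ => (step S).symm

lemma PV_expand {i j : Fin n} (hij : i ≠ j) (f g : (Fin n → Bool) → ℝ) (ρ : ℝ) :
    PV f g i j ρ = 16 * ∑ S ∈ Finset.univ.filter (fun S : Finset (Fin n) => i ∉ S ∧ j ∉ S),
      ρ ^ S.card * (Sh f (insert j (insert i S)) * Sh g (insert j (insert i S))) := by
  rw [PV_fourier, Finset.mul_sum]
  rw [← Finset.sum_filter_of_ne (p := fun S : Finset (Fin n) => i ∉ S ∧ j ∉ S)]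
  · refine Finset.sum_congr rfl fun S hS => ?_
    simp only [Finset.mem_filter] at hS
    rw [sum_pD2_mul_chi hij f hS.2.1 hS.2.2, sum_pD2_mul_chi hij g hS.2.1 hS.2.2]
    unfold Sh
    ring
  · intro S _ hne
    by_contra hmem
    apply hne
    have : i ∈ S ∨ j ∈ S := by tauto
    rw [sum_pD2_mul_chi_zero hij f this]
    ring

lemma PV_zero_eq (f g : (Fin n → Bool) → ℝ) (i j : Fin n) :
    PV f g i j 0 = (∑ x : Fin n → Bool, pD n i (pD n j f) x)
      * (∑ y : Fin n → Bool, pD n i (pD n j g) y) := by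
  unfold PV
  rw [Finset.sum_mul_sum]
  refine Finset.sum_congr rfl fun x _ => Finset.sum_congr rfl fun y _ => ?_
  rw [ker_zero, mul_one]

lemma PV_continuous (f g : (Fin n → Bool) → ℝ) (i j : Fin n) :
    Continuous (fun ρ => PV f g i j ρ) := by
  unfold PV
  apply continuous_finset_sum
  intro x _
  apply continuous_finset_sum
  intro y _
  apply Continuous.mul continuous_const
  unfold ker
  apply continuous_finset_prod
  intro k _
  fun_prop

lemma PV_nonneg {f g : (Fin n → Bool) → ℝ} {i j : Fin n}
    (hsgn : (∀ x, 0 ≤ pD n i (pD n j f) x) ∧ (∀ x, 0 ≤ pD n i (pD n j g) x)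
          ∨ (∀ x, pD n i (pD n j f) x ≤ 0) ∧ (∀ x, pD n i (pD n j g) x ≤ 0))
    {ρ : ℝ} (h0 : 0 ≤ ρ) (h1 : ρ ≤ 1) : 0 ≤ PV f g i j ρ := by
  unfold PV
  refine Finset.sum_nonneg fun x _ => Finset.sum_nonneg fun y _ => ?_
  refine mul_nonneg ?_ (ker_nonneg h0 h1 x y)
  rcases hsgn with ⟨hf, hg⟩ | ⟨hf, hg⟩
  · exact mul_nonneg (hf x) (hg y)
  · simpa [neg_mul_neg] using mul_nonneg (neg_nonneg.2 (hf x)) (neg_nonneg.2 (hg y))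

noncomputable def wt (c : ℕ) : ℝ := 1 / (((c : ℝ) + 1) * ((c : ℝ) + 2))

lemma integral_weight (c : ℕ) : (∫ ρ in (0:ℝ)..1, (1 - ρ) * ρ ^ c) = wt c := by
  have hcong : Set.EqOn (fun ρ : ℝ => (1 - ρ) * ρ ^ c)
      (fun ρ : ℝ => ρ ^ c - ρ ^ (c + 1)) (Set.uIcc (0:ℝ) 1) := fun ρ _ => by ring
  rw [intervalIntegral.integral_congr hcong]
  rw [intervalIntegral.integral_sub (intervalIntegral.intervalIntegrable_pow c)
    (intervalIntegral.intervalIntegrable_pow (c + 1))]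
  rw [integral_pow, integral_pow]
  unfold wt
  have h1 : ((c : ℝ) + 1) ≠ 0 := by positivity
  have h2 : ((c : ℝ) + 2) ≠ 0 := by positivity
  rw [zero_pow (Nat.succ_ne_zero c), zero_pow (Nat.succ_ne_zero (c + 1)), one_pow, one_pow]
  push_cast
  have h3 : (c : ℝ) + 1 + 1 = (c : ℝ) + 2 := by ring
  rw [h3, div_sub_div _ _ h1 h2, div_eq_div_iff (by positivity) (by positivity)]
  ring

lemma integral_PV {i j : Fin n} (hij : i ≠ j) (f g : (Fin n → Bool) → ℝ) :
    (∫ ρ in (0:ℝ)..1, (1 - ρ) * PV f g i j ρ)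
      = 16 * ∑ S ∈ Finset.univ.filter (fun S : Finset (Fin n) => i ∉ S ∧ j ∉ S),
          wt S.card * (Sh f (insert j (insert i S)) * Sh g (insert j (insert i S))) := by
  have hcong : Set.EqOn (fun ρ : ℝ => (1 - ρ) * PV f g i j ρ)
      (fun ρ : ℝ => ∑ S ∈ Finset.univ.filter (fun S : Finset (Fin n) => i ∉ S ∧ j ∉ S),
        (16 * (Sh f (insert j (insert i S)) * Sh g (insert j (insert i S))))
          * ((1 - ρ) * ρ ^ S.card)) (Set.uIcc (0:ℝ) 1) := by
    intro ρ _
    simp only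
    rw [PV_expand hij f g ρ, Finset.mul_sum, Finset.mul_sum]
    exact Finset.sum_congr rfl fun S _ => by ring
  rw [intervalIntegral.integral_congr hcong]
  rw [intervalIntegral.integral_finset_sum]
  · rw [Finset.mul_sum]
    refine Finset.sum_congr rfl fun S _ => ?_
    rw [intervalIntegral.integral_const_mul, integral_weight]
    ring
  · intro S _
    apply Continuous.intervalIntegrable
    fun_prop

lemma PV_zero_of_integral_zero {f g : (Fin n → Bool) → ℝ} {i j : Fin n}
    (hnn : ∀ ρ : ℝ, 0 ≤ ρ → ρ ≤ 1 → 0 ≤ PV f g i j ρ)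
    (hint : (∫ ρ in (0:ℝ)..1, (1 - ρ) * PV f g i j ρ) = 0) :
    PV f g i j 0 = 0 := by
  by_contra hne
  have hpos : 0 < PV f g i j 0 := lt_of_le_of_ne (hnn 0 le_rfl zero_le_one) (Ne.symm hne)
  set G : ℝ → ℝ := fun ρ => (1 - ρ) * PV f g i j ρ with hG
  have hGc : Continuous G := by
    apply Continuous.mul (by fun_prop) (PV_continuous f g i j)
  have hG0 : G 0 = PV f g i j 0 := by simp [hG]
  have hca : ContinuousAt G 0 := hGc.continuousAt
  obtain ⟨δ, hδpos, hδ⟩ := Metric.continuousAt_iff.mp hca (G 0 / 2)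
    (by rw [hG0]; positivity)
  set d : ℝ := min (δ / 2) 1 with hd
  have hdpos : 0 < d := lt_min (by linarith) one_pos
  have hd1 : d ≤ 1 := min_le_right _ _
  have hGint : IntervalIntegrable G MeasureTheory.volume 0 1 :=
    hGc.intervalIntegrable 0 1
  have h1 : 0 < ∫ ρ in (0:ℝ)..d, G ρ := by
    apply intervalIntegral.intervalIntegral_pos_of_pos_on
      (hGc.intervalIntegrable 0 d) _ hdpos
    intro x hx
    have hxd : dist x 0 < δ := by
      rw [Real.dist_eq, sub_zero, abs_of_pos hx.1]
      calc x < d := hx.2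
        _ ≤ δ / 2 := min_le_left _ _
        _ < δ := by linarith
    have hclose := hδ hxd
    rw [Real.dist_eq] at hclose
    have habs := abs_lt.mp hclose
    have h0pos : 0 < G 0 := by rw [hG0]; exact hpos
    linarith [habs.1]
  have h2 : 0 ≤ ∫ ρ in d..1, G ρ := by
    apply intervalIntegral.integral_nonneg hd1
    intro u hu
    have hu0 : 0 ≤ u := le_trans hdpos.le hu.1
    have hu1 : u ≤ 1 := hu.2
    exact mul_nonneg (by linarith) (hnn u hu0 hu1)
  have hsplit : (∫ ρ in (0:ℝ)..d, G ρ) + (∫ ρ in d..1, G ρ) = ∫ ρ in (0:ℝ)..1, G ρ :=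
    intervalIntegral.integral_add_adjacent_intervals (hGc.intervalIntegrable 0 d)
      (hGc.intervalIntegrable d 1)
  rw [hint] at hsplit
  linarith

lemma pair_reindex {i j : Fin n} (hij : i ≠ j) (f g : (Fin n → Bool) → ℝ) :
    ∑ S ∈ Finset.univ.filter (fun S : Finset (Fin n) => i ∉ S ∧ j ∉ S),
        wt S.card * (Sh f (insert j (insert i S)) * Sh g (insert j (insert i S)))
      = ∑ T ∈ Finset.univ.filter (fun T : Finset (Fin n) => i ∈ T ∧ j ∈ T),
        wt (T.card - 2) * (Sh f T * Sh g T) := by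
  apply Finset.sum_nbij' (i := fun S => insert j (insert i S))
    (j := fun T => (T.erase j).erase i)
  · intro S hS
    simp only [Finset.mem_filter, Finset.mem_univ, true_and] at hS ⊢
    exact ⟨Finset.mem_insert_of_mem (Finset.mem_insert_self i S), Finset.mem_insert_self j _⟩
  · intro T hT
    simp only [Finset.mem_filter, Finset.mem_univ, true_and]
    refine ⟨Finset.notMem_erase i _, fun hmem => ?_⟩
    exact Finset.notMem_erase j T (Finset.mem_of_mem_erase hmem)
  · intro S hS
    simp only [Finset.mem_filter, Finset.mem_univ, true_and] at hS
    have hj' : j ∉ insert i S := by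
      simp only [Finset.mem_insert, not_or]; exact ⟨Ne.symm hij, hS.2⟩
    rw [Finset.erase_insert hj', Finset.erase_insert hS.1]
  · intro T hT
    simp only [Finset.mem_filter, Finset.mem_univ, true_and] at hT
    have hi' : i ∈ T.erase j := Finset.mem_erase.mpr ⟨hij, hT.1⟩
    rw [Finset.insert_erase hi', Finset.insert_erase hT.2]
  · intro S hS
    simp only [Finset.mem_filter, Finset.mem_univ, true_and] at hS
    have hj' : j ∉ insert i S := by
      simp only [Finset.mem_insert, not_or]; exact ⟨Ne.symm hij, hS.2⟩
    have hcard : S.card + 1 + 1 - 2 = S.card := by omega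
    rw [Finset.card_insert_of_notMem hj', Finset.card_insert_of_notMem hS.1, hcard]

lemma double_count (v : Finset (Fin n) → ℝ) :
    ∑ p ∈ (Finset.univ : Finset (Fin n)).offDiag,
        ∑ T ∈ Finset.univ.filter (fun T : Finset (Fin n) => p.1 ∈ T ∧ p.2 ∈ T), v T
      = ∑ T : Finset (Fin n), ((T.card * (T.card - 1) : ℕ) : ℝ) * v T := by
  simp only [Finset.sum_filter]
  rw [Finset.sum_comm]
  refine Finset.sum_congr rfl fun T _ => ?_
  rw [← Finset.sum_filter]
  have hfil : (Finset.univ : Finset (Fin n)).offDiag.filter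
      (fun p => p.1 ∈ T ∧ p.2 ∈ T) = T.offDiag := by
    ext p
    simp only [Finset.mem_filter, Finset.mem_offDiag, Finset.mem_univ, true_and]
    tauto
  rw [hfil, Finset.sum_const, Finset.offDiag_card]
  have hc : T.card * T.card - T.card = T.card * (T.card - 1) := by
    rw [Nat.mul_sub, Nat.mul_one]
  rw [hc, nsmul_eq_mul]

lemma coeff (c : ℕ) : ((c * (c - 1) : ℕ) : ℝ) * wt (c - 2) = if 2 ≤ c then 1 else 0 := by
  match c with
  | 0 => simp [wt]
  | 1 => simp [wt]
  | (k+2) =>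
    rw [if_pos (by omega)]
    have h1 : (k + 2) * (k + 2 - 1) = (k + 2) * (k + 1) := rfl
    have h2 : k + 2 - 2 = k := rfl
    rw [h1, h2]
    unfold wt
    have hk1 : ((k : ℝ) + 1) ≠ 0 := by positivity
    have hk2 : ((k : ℝ) + 2) ≠ 0 := by positivity
    push_cast
    field_simp

lemma grand (f g : (Fin n → Bool) → ℝ) :
    ∑ p ∈ (Finset.univ : Finset (Fin n)).offDiag,
        (∫ ρ in (0:ℝ)..1, (1 - ρ) * PV f g p.1 p.2 ρ)
      = 16 * ∑ T ∈ Finset.univ.filter (fun T : Finset (Fin n) => 2 ≤ T.card),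
          Sh f T * Sh g T := by
  have h1 : ∀ p ∈ (Finset.univ : Finset (Fin n)).offDiag,
      (∫ ρ in (0:ℝ)..1, (1 - ρ) * PV f g p.1 p.2 ρ)
        = 16 * ∑ T ∈ Finset.univ.filter (fun T : Finset (Fin n) => p.1 ∈ T ∧ p.2 ∈ T),
            wt (T.card - 2) * (Sh f T * Sh g T) := by
    intro p hp
    have hne : p.1 ≠ p.2 := (Finset.mem_offDiag.mp hp).2.2
    rw [integral_PV hne f g, pair_reindex hne]
  rw [Finset.sum_congr rfl h1, ← Finset.mul_sum]
  rw [double_count (v := fun T => wt (T.card - 2) * (Sh f T * Sh g T))]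
  congr 1
  rw [Finset.sum_filter]
  refine Finset.sum_congr rfl fun T _ => ?_
  have hco := coeff T.card
  rcases le_or_gt 2 T.card with h | h
  · rw [if_pos h] at hco ⊢
    rw [← mul_assoc, hco, one_mul]
  · rw [if_neg (not_le.mpr h)] at hco ⊢
    rw [← mul_assoc, hco, zero_mul]

lemma fhat_eq (f : (Fin n → Bool) → ℝ) (S : Finset (Fin n)) :
    fhat n f S = Sh f S / 2 ^ n := rfl

lemma sum_fhat_eq (f g : (Fin n → Bool) → ℝ) :
    ∑ S ∈ Finset.univ.filter (fun S : Finset (Fin n) => 2 ≤ S.card),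
        fhat n f S * fhat n g S
      = (∑ S ∈ Finset.univ.filter (fun S : Finset (Fin n) => 2 ≤ S.card),
          Sh f S * Sh g S) / ((2 : ℝ) ^ n * 2 ^ n) := by
  rw [Finset.sum_div]
  refine Finset.sum_congr rfl fun S _ => ?_
  rw [fhat_eq, fhat_eq, div_mul_div_comm]

lemma fhat_zero_of_pD2_zero {i j : Fin n} (hij : i ≠ j) {f : (Fin n → Bool) → ℝ}
    (hz : ∀ x, pD n i (pD n j f) x = 0) {S : Finset (Fin n)} (hiS : i ∈ S) (hjS : j ∈ S) :
    fhat n f S = 0 := by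
  set S0 := (S.erase j).erase i with hS0
  have hi0 : i ∉ S0 := Finset.notMem_erase i _
  have hj0 : j ∉ S0 := fun hmem => Finset.notMem_erase j S (Finset.mem_of_mem_erase hmem)
  have hrec : insert j (insert i S0) = S := by
    rw [hS0, Finset.insert_erase (Finset.mem_erase.mpr ⟨hij, hiS⟩), Finset.insert_erase hjS]
  have hkey := sum_pD2_mul_chi hij f hi0 hj0
  rw [hrec] at hkey
  have hzero : ∑ x : Fin n → Bool, pD n i (pD n j f) x * chi n S0 x = 0 :=
    Finset.sum_eq_zero fun x _ => by rw [hz x, zero_mul]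
  rw [hzero] at hkey
  have hSh : Sh f S = 0 := by
    unfold Sh; linarith
  rw [fhat_eq, hSh, zero_div]

end L2W

open L2W

/-- Under the sign conditions on the second differences, the
level-`≥ 2` Fourier weight vanishes iff for every pair `i < j` at least one of
`∂_{ij} f`, `∂_{ij} g` is identically zero. -/
theorem level2_weight_vanishing_criterion (n : ℕ) (f g : (Fin n → Bool) → ℝ)
    (hsign : (∀ (i j : Fin n), i ≠ j → ∀ x, 0 ≤ pD n i (pD n j f) x ∧
                0 ≤ pD n i (pD n j g) x) ∨
             (∀ (i j : Fin n), i ≠ j → ∀ x, pD n i (pD n j f) x ≤ 0 ∧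
                pD n i (pD n j g) x ≤ 0)) :
    (∑ S ∈ Finset.univ.filter (fun S : Finset (Fin n) => 2 ≤ S.card),
        fhat n f S * fhat n g S) = 0
    ↔ ∀ i j : Fin n, i < j →
        (∀ x, pD n i (pD n j f) x = 0) ∨ (∀ x, pD n i (pD n j g) x = 0) := by
  have pairsign : ∀ {i j : Fin n}, i ≠ j →
      ((∀ x, 0 ≤ pD n i (pD n j f) x) ∧ (∀ x, 0 ≤ pD n i (pD n j g) x)
      ∨ (∀ x, pD n i (pD n j f) x ≤ 0) ∧ (∀ x, pD n i (pD n j g) x ≤ 0)) := by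
    intro i j hne
    rcases hsign with hs | hs
    · exact Or.inl ⟨fun x => (hs i j hne x).1, fun x => (hs i j hne x).2⟩
    · exact Or.inr ⟨fun x => (hs i j hne x).1, fun x => (hs i j hne x).2⟩
  constructor
  · intro hQ i j hij
    have hne : i ≠ j := ne_of_lt hij
    have h2n : ((2:ℝ) ^ n * 2 ^ n) ≠ 0 := by positivity
    have hSh : ∑ S ∈ Finset.univ.filter (fun S : Finset (Fin n) => 2 ≤ S.card),
        Sh f S * Sh g S = 0 := by
      have h0 : (∑ S ∈ Finset.univ.filter (fun S : Finset (Fin n) => 2 ≤ S.card),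
          Sh f S * Sh g S) / ((2 : ℝ) ^ n * 2 ^ n) = 0 := by
        rw [← sum_fhat_eq f g]; exact hQ
      exact (div_eq_zero_iff.mp h0).resolve_right h2n
    have hsum0 : ∑ p ∈ (Finset.univ : Finset (Fin n)).offDiag,
        (∫ ρ in (0:ℝ)..1, (1 - ρ) * PV f g p.1 p.2 ρ) = 0 := by
      rw [grand f g, hSh, mul_zero]
    have hnonneg : ∀ p ∈ (Finset.univ : Finset (Fin n)).offDiag,
        0 ≤ ∫ ρ in (0:ℝ)..1, (1 - ρ) * PV f g p.1 p.2 ρ := by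
      intro p hp
      have hnep : p.1 ≠ p.2 := (Finset.mem_offDiag.mp hp).2.2
      apply intervalIntegral.integral_nonneg zero_le_one
      intro u hu
      exact mul_nonneg (by linarith [hu.2]) (PV_nonneg (pairsign hnep) hu.1 hu.2)
    have heach := (Finset.sum_eq_zero_iff_of_nonneg hnonneg).mp hsum0
    have hmem : ((i, j) : Fin n × Fin n) ∈ (Finset.univ : Finset (Fin n)).offDiag :=
      Finset.mem_offDiag.mpr ⟨Finset.mem_univ _, Finset.mem_univ _, hne⟩
    have hI := heach (i, j) hmem
    have hPV0 : PV f g i j 0 = 0 :=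
      PV_zero_of_integral_zero (fun ρ h0 h1 => PV_nonneg (pairsign hne) h0 h1) hI
    rw [PV_zero_eq] at hPV0
    rcases mul_eq_zero.mp hPV0 with h | h
    · left; intro x
      rcases hsign with hs | hs
      · exact (Finset.sum_eq_zero_iff_of_nonneg
          (fun y _ => (hs i j hne y).1)).mp h x (Finset.mem_univ x)
      · exact (Finset.sum_eq_zero_iff_of_nonpos
          (fun y _ => (hs i j hne y).1)).mp h x (Finset.mem_univ x)
    · right; intro x
      rcases hsign with hs | hs
      · exact (Finset.sum_eq_zero_iff_of_nonneg
          (fun y _ => (hs i j hne y).2)).mp h x (Finset.mem_univ x)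
      · exact (Finset.sum_eq_zero_iff_of_nonpos
          (fun y _ => (hs i j hne y).2)).mp h x (Finset.mem_univ x)
  · intro hcond
    apply Finset.sum_eq_zero
    intro S hS
    rw [Finset.mem_filter] at hS
    have hcard : 1 < S.card := lt_of_lt_of_le one_lt_two hS.2
    obtain ⟨a, ha, b, hb, hab⟩ := Finset.one_lt_card.mp hcard
    rcases lt_or_gt_of_ne hab with hlt | hlt
    · rcases hcond a b hlt with hz | hz
      · rw [fhat_zero_of_pD2_zero (ne_of_lt hlt) hz ha hb, zero_mul]
      · rw [fhat_zero_of_pD2_zero (ne_of_lt hlt) hz ha hb, mul_zero]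
    · rcases hcond b a hlt with hz | hz
      · rw [fhat_zero_of_pD2_zero (ne_of_lt hlt) hz hb ha, zero_mul]
      · rw [fhat_zero_of_pD2_zero (ne_of_lt hlt) hz hb ha, mul_zero]
end

section
/- Let f, g : {0,1}^n → {0,1} be increasing Boolean functions that are both supermodular or both submodular, with E[g] = α ≤ 1/2 and α > 0. Then E[fg] − E[f]E[g] ≥ (α/2)·log₂(1/α)·min_{i ∈ [n]} Inf_i[f]. In particular, if g is additionally antipodal (g(x) = 1 − g(1−x) for all x, so E[g] = 1/2), then E[fg] − E[f]E[g] ≥ (1/4)·min_{i ∈ [n]} Inf_i[f]. -/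
open Finset MeasureTheory

/-! ### Auxiliary development -/

noncomputable def andF (n : ℕ) (S : Finset (Fin n)) (x : Fin n → Bool) : ℝ :=
  if ∀ i ∈ S, x i = true then 1 else 0

lemma andF_eq_zero_or_one (n : ℕ) (S : Finset (Fin n)) (x : Fin n → Bool) :
    andF n S x = 0 ∨ andF n S x = 1 := by
  unfold andF; split <;> simp

lemma andF_eq_prod (n : ℕ) (S : Finset (Fin n)) (x : Fin n → Bool) :
    andF n S x = ∏ i : Fin n, (if i ∈ S then (if x i = true then (1:ℝ) else 0) else 1) := by
  unfold andF
  by_cases h : ∀ i ∈ S, x i = true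
  · rw [if_pos h, eq_comm, Finset.prod_eq_one]
    intro i _
    by_cases hi : i ∈ S
    · simp [hi, h i hi]
    · simp [hi]
  · rw [if_neg h, eq_comm]
    push_neg at h
    obtain ⟨i, hiS, hx⟩ := h
    apply Finset.prod_eq_zero (Finset.mem_univ i)
    simp [hiS, hx]

lemma ev_andF (n : ℕ) (S : Finset (Fin n)) : Ev n (andF n S) = (1/2) ^ S.card := by
  classical
  have hk : S.card ≤ n := by simpa using Finset.card_le_univ S
  have hsum : (∑ x : Fin n → Bool, andF n S x) = 2 ^ (n - S.card) := by
    simp_rw [andF_eq_prod]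
    rw [← Fintype.prod_sum (fun i (b : Bool) =>
      if i ∈ S then (if b = true then (1:ℝ) else 0) else 1)]
    have h1 : ∀ i : Fin n,
        (∑ b : Bool, if i ∈ S then (if b = true then (1:ℝ) else 0) else 1)
          = if i ∈ S then 1 else 2 := by
      intro i; by_cases hi : i ∈ S <;> simp [hi]
    rw [Finset.prod_congr rfl (fun i _ => h1 i)]
    rw [← Finset.prod_mul_prod_compl S]
    rw [Finset.prod_congr rfl (fun i hi => if_pos hi),
        Finset.prod_congr rfl (fun i hi => if_neg (Finset.mem_compl.mp hi))]
    simp [Finset.card_compl]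
  rw [Ev, hsum, div_eq_iff (by positivity), div_pow, one_pow, div_mul_eq_mul_div,
      one_mul, eq_div_iff (by positivity), ← pow_add]
  congr 1
  omega

lemma ev_const (n : ℕ) (c : ℝ) : Ev n (fun _ => c) = c := by
  rw [Ev, Finset.sum_const, Finset.card_univ, Fintype.card_fun, Fintype.card_bool,
      Fintype.card_fin, nsmul_eq_mul]
  push_cast
  field_simp

lemma ev_add (n : ℕ) (h k : (Fin n → Bool) → ℝ) :
    Ev n (fun x => h x + k x) = Ev n h + Ev n k := by
  simp [Ev, Finset.sum_add_distrib, add_div]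

lemma ev_sub (n : ℕ) (h k : (Fin n → Bool) → ℝ) :
    Ev n (fun x => h x - k x) = Ev n h - Ev n k := by
  simp [Ev, Finset.sum_sub_distrib, sub_div]

lemma ev_not (n : ℕ) (h : (Fin n → Bool) → ℝ) :
    Ev n (fun x => h (fun i => ! x i)) = Ev n h := by
  unfold Ev
  congr 1
  exact Fintype.sum_bijective (fun x : Fin n → Bool => fun i => ! x i)
    (Function.Involutive.bijective (fun x => funext fun i => Bool.not_not (x i)))
    _ _ (fun x => rfl)

lemma bool_inf_eq (a b : Bool) : a ⊓ b = (a && b) := by cases a <;> cases b <;> decide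

lemma classify_super (n : ℕ) (f : (Fin n → Bool) → ℝ)
    (hf01 : ∀ x, f x = 0 ∨ f x = 1) (hmono : Increasing' n f)
    (hsup : Supermodular' n f) :
    (∀ x, f x = 0) ∨ ∃ T : Finset (Fin n), ∀ x, f x = andF n T x := by
  classical
  by_cases hex : ∃ x, f x = 1
  · right
    set A : Finset (Fin n → Bool) := Finset.univ.filter (fun x => f x = 1) with hA
    have hAne : A.Nonempty := ⟨hex.choose, by simp [hA, hex.choose_spec]⟩
    have hle1 : ∀ z, f z ≤ 1 := by
      intro z; rcases hf01 z with h | h <;> rw [h] <;> norm_num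
    have hge0 : ∀ z, 0 ≤ f z := by
      intro z; rcases hf01 z with h | h <;> rw [h] <;> norm_num
    have hclosed : ∀ x ∈ ({z | f z = 1} : Set (Fin n → Bool)),
        ∀ y ∈ ({z | f z = 1} : Set (Fin n → Bool)),
        x ⊓ y ∈ ({z | f z = 1} : Set (Fin n → Bool)) := by
      intro x hx y hy
      have hxy := hsup x y
      have hmeet : (fun i => x i && y i) = x ⊓ y := by
        funext i; rw [Pi.inf_apply, bool_inf_eq]
      rw [hmeet] at hxy
      simp only [Set.mem_setOf_eq] at hx hy ⊢
      have h1 := hle1 (fun i => x i || y i)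
      have h2 := hge0 (x ⊓ y)
      rcases hf01 (x ⊓ y) with h | h
      · rw [hx, hy, h] at hxy; linarith
      · exact h
    have hmemA : ∀ x ∈ A, id x ∈ ({z | f z = 1} : Set (Fin n → Bool)) := by
      intro x hx; simpa [hA] using (Finset.mem_filter.mp hx).2
    have hfm : f (A.inf' hAne id) = 1 :=
      Finset.inf'_mem ({z | f z = 1} : Set (Fin n → Bool)) hclosed A hAne id hmemA
    set m : Fin n → Bool := A.inf' hAne id with hm
    refine ⟨Finset.univ.filter (fun i => m i = true), fun x => ?_⟩
    unfold andF
    by_cases hx : ∀ i ∈ Finset.univ.filter (fun i => m i = true), x i = true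
    · rw [if_pos hx]
      have hle : ∀ i, m i ≤ x i := by
        intro i
        cases hmi : m i with
        | false => exact Bool.false_le _
        | true => rw [hx i (by simp [hmi])]
      have hmx := hmono m x hle
      rw [hfm] at hmx
      rcases hf01 x with h | h
      · rw [h] at hmx; norm_num at hmx
      · exact h
    · rw [if_neg hx]
      push_neg at hx
      obtain ⟨i, hiT, hxi⟩ := hx
      rcases hf01 x with h | h
      · exact h
      · exfalso
        have hxA : x ∈ A := by simp [hA, h]
        have hmle : m ≤ x := Finset.inf'_le id hxA
        have hmi : m i = true := by simpa using hiT
        have hxif : x i = false := by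
          cases hxx : x i
          · rfl
          · exact absurd hxx hxi
        have := hmle i
        rw [hmi, hxif] at this
        exact (by decide : ¬ ((true:Bool) ≤ false)) this
  · left
    intro x
    rcases hf01 x with h | h
    · exact h
    · exact absurd ⟨x, h⟩ hex

lemma andF_update_notMem (n : ℕ) (T : Finset (Fin n)) (i : Fin n) (hi : i ∉ T)
    (x : Fin n → Bool) (b : Bool) :
    andF n T (Function.update x i b) = andF n T x := by
  unfold andF
  have hupd : ∀ j ∈ T, Function.update x i b j = x j := by
    intro j hj
    exact Function.update_of_ne (fun h : j = i => hi (h ▸ hj)) _ _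
  refine if_congr ?_ rfl rfl
  constructor
  · intro h j hj; rw [← hupd j hj]; exact h j hj
  · intro h j hj; rw [hupd j hj]; exact h j hj

lemma andF_factor (n : ℕ) (T : Finset (Fin n)) (i : Fin n) (hi : i ∈ T)
    (x : Fin n → Bool) :
    andF n T x = (if x i = true then (1:ℝ) else 0) * andF n (T.erase i) x := by
  unfold andF
  by_cases hxi : x i = true <;> by_cases hP : ∀ j ∈ T.erase i, x j = true
  · rw [if_pos hxi, if_pos hP, one_mul, if_pos]
    intro j hj
    rcases eq_or_ne j i with rfl | hne
    · exact hxi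
    · exact hP j (Finset.mem_erase.mpr ⟨hne, hj⟩)
  · rw [if_neg hP, mul_zero, if_neg]
    intro h; exact hP fun j hj => h j (Finset.mem_of_mem_erase hj)
  · rw [if_neg hxi, zero_mul, if_neg]
    intro h; exact hxi (h i hi)
  · rw [if_neg hxi, zero_mul, if_neg]
    intro h; exact hxi (h i hi)

lemma infB_andF (n : ℕ) (T : Finset (Fin n)) (i : Fin n) :
    InfB n i (andF n T) = if i ∈ T then (1/2 : ℝ) ^ (T.card - 1) else 0 := by
  classical
  by_cases hi : i ∈ T
  · rw [if_pos hi]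
    have key : ∀ x : Fin n → Bool,
        (if andF n T x = andF n T (Function.update x i (! x i)) then (0:ℝ) else 1)
          = andF n (T.erase i) x := by
      intro x
      have hupd : andF n (T.erase i) (Function.update x i (! x i))
          = andF n (T.erase i) x :=
        andF_update_notMem n (T.erase i) i (Finset.notMem_erase i T) x _
      rw [andF_factor n T i hi x, andF_factor n T i hi (Function.update x i (! x i)),
          Function.update_self, hupd]
      rcases andF_eq_zero_or_one n (T.erase i) x with h | h
      · rw [h, mul_zero, mul_zero, if_pos rfl]
      · rw [h, mul_one, mul_one]
        cases hxi : x i <;> norm_num [hxi]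
    rw [InfB, show (fun x => if andF n T x = andF n T (Function.update x i (! x i))
        then (0:ℝ) else 1) = andF n (T.erase i) from funext key,
      ev_andF, Finset.card_erase_of_mem hi]
  · rw [if_neg hi]
    have key : ∀ x : Fin n → Bool,
        (if andF n T x = andF n T (Function.update x i (! x i)) then (0:ℝ) else 1)
          = 0 := by
      intro x
      rw [if_pos (andF_update_notMem n T i hi x (! x i)).symm]
    rw [InfB, show (fun x => if andF n T x = andF n T (Function.update x i (! x i))
        then (0:ℝ) else 1) = fun _ => (0:ℝ) from funext key, ev_const]

lemma andF_mul (n : ℕ) (T S : Finset (Fin n)) (x : Fin n → Bool) :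
    andF n T x * andF n S x = andF n (T ∪ S) x := by
  unfold andF
  by_cases hT : ∀ i ∈ T, x i = true <;> by_cases hS : ∀ i ∈ S, x i = true
  · rw [if_pos hT, if_pos hS, one_mul, if_pos]
    intro i hi
    rcases Finset.mem_union.mp hi with h | h
    · exact hT i h
    · exact hS i h
  · rw [if_neg hS, mul_zero, if_neg]
    intro h; exact hS fun i hi => h i (Finset.mem_union_right _ hi)
  · rw [if_neg hT, zero_mul, if_neg]
    intro h; exact hT fun i hi => h i (Finset.mem_union_left _ hi)
  · rw [if_neg hT, zero_mul, if_neg]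
    intro h; exact hT fun i hi => h i (Finset.mem_union_left _ hi)

lemma main_super (n : ℕ) (hn : 0 < n) (f g : (Fin n → Bool) → ℝ)
    (hf01 : ∀ x, f x = 0 ∨ f x = 1) (hg01 : ∀ x, g x = 0 ∨ g x = 1)
    (hf : Increasing' n f) (hg : Increasing' n g)
    (hfsup : Supermodular' n f) (hgsup : Supermodular' n g)
    (α : ℝ) (hα : Ev n g = α) (hα0 : 0 < α) (hα2 : α ≤ 1 / 2) :
    Ev n (fun x => f x * g x) - Ev n f * Ev n g ≥
      (α / 2) * Real.logb 2 (1 / α) * ⨅ i : Fin n, InfB n i f := by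
  classical
  have hnon : Nonempty (Fin n) := ⟨⟨0, hn⟩⟩
  have hcoef : 0 ≤ (α / 2) * Real.logb 2 (1 / α) := by
    apply mul_nonneg (by linarith)
    apply Real.logb_nonneg (by norm_num)
    rw [le_div_iff₀ hα0, one_mul]
    linarith
  rcases classify_super n f hf01 hf hfsup with hf0 | ⟨T, hT⟩
  · have h1 : Ev n (fun x => f x * g x) = 0 := by
      rw [show (fun x => f x * g x) = fun _ => (0:ℝ) from
        funext fun x => by rw [hf0 x, zero_mul], ev_const]
    have h2 : Ev n f = 0 := by
      rw [show f = fun _ => (0:ℝ) from funext hf0, ev_const]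
    have h3 : ∀ i, InfB n i f = 0 := by
      intro i
      rw [InfB, show (fun x => if f x = f (Function.update x i (! x i))
          then (0:ℝ) else 1) = fun _ => (0:ℝ) from
        funext fun x => by rw [if_pos (by rw [hf0 x, hf0])], ev_const]
    have h4 : (⨅ i : Fin n, InfB n i f) = 0 := by
      simp only [h3]
      exact ciInf_const
    rw [h1, h2, h4, zero_mul, zero_sub, mul_zero, neg_zero]
  · rcases classify_super n g hg01 hg hgsup with hg0 | ⟨S, hS⟩
    · exfalso
      have : Ev n g = 0 := by
        rw [show g = fun _ => (0:ℝ) from funext hg0, ev_const]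
      rw [hα] at this
      linarith
    have hfT : f = andF n T := funext hT
    have hgS : g = andF n S := funext hS
    have hαval : α = (1/2 : ℝ) ^ S.card := by
      rw [← hα, hgS, ev_andF]
    have hk1 : 1 ≤ S.card := by
      by_contra h
      push_neg at h
      interval_cases hS : S.card
      · rw [hαval] at hα2; norm_num at hα2
    have hfg : Ev n (fun x => f x * g x) = (1/2 : ℝ) ^ (T ∪ S).card := by
      rw [show (fun x => f x * g x) = andF n (T ∪ S) from
        funext fun x => by rw [hfT, hgS]; exact andF_mul n T S x, ev_andF]
    have hEf : Ev n f = (1/2 : ℝ) ^ T.card := by rw [hfT, ev_andF]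
    have hEg : Ev n g = (1/2 : ℝ) ^ S.card := by rw [hgS, ev_andF]
    have hlog : Real.logb 2 (1 / α) = S.card := by
      rw [hαval, one_div, one_div, inv_pow, inv_inv, Real.logb_pow,
          Real.logb_self_eq_one (by norm_num), mul_one]
    by_cases hTu : T = Finset.univ
    · have hInf : ∀ i : Fin n, InfB n i f = (1/2 : ℝ) ^ (n - 1) := by
        intro i
        rw [hfT, infB_andF, if_pos (by rw [hTu]; exact Finset.mem_univ i), hTu,
            Finset.card_univ, Fintype.card_fin]
      have hiInf : (⨅ i : Fin n, InfB n i f) = (1/2 : ℝ) ^ (n - 1) := by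
        simp only [hInf]
        exact ciInf_const
      have hTS : (T ∪ S).card = n := by
        rw [hTu, show Finset.univ ∪ S = Finset.univ from Finset.eq_univ_iff_forall.mpr
          fun i => Finset.mem_union_left _ (Finset.mem_univ i),
          Finset.card_univ, Fintype.card_fin]
      rw [hfg, hEf, hEg, hiInf, hlog, hTS, hTu, Finset.card_univ, Fintype.card_fin,
          hαval]
      set k := S.card
      have hpowpos : (0:ℝ) < (1/2 : ℝ) ^ n := by positivity
      have hkey : (k : ℝ) * (1/2 : ℝ) ^ k ≤ 1 - (1/2 : ℝ) ^ k := by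
        have h2k : (k : ℝ) + 1 ≤ 2 ^ k := by
          exact_mod_cast (Nat.lt_two_pow_self (n := k))
        have hp : (1/2 : ℝ) ^ k = ((2:ℝ) ^ k)⁻¹ := by
          rw [one_div, inv_pow]
        have h2kpos : (0:ℝ) < 2 ^ k := by positivity
        rw [hp]
        have hinv : (0:ℝ) ≤ ((2:ℝ)^k)⁻¹ := le_of_lt (inv_pos.mpr h2kpos)
        have hmul := mul_le_mul_of_nonneg_right h2k hinv
        rw [mul_inv_cancel₀ (ne_of_gt h2kpos)] at hmul
        nlinarith
      have hhalf : (1/2 : ℝ) ^ (n-1) = 2 * (1/2 : ℝ) ^ n := by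
        set m := n - 1 with hm
        rw [show n = m + 1 from by omega, pow_succ]
        ring
      rw [hhalf]
      have expand : (1/2 : ℝ) ^ k / 2 * (k : ℝ) * (2 * (1/2:ℝ)^n)
          = ((k:ℝ) * (1/2:ℝ)^k) * (1/2:ℝ)^n := by ring
      rw [expand]
      calc ((k:ℝ) * (1/2:ℝ)^k) * (1/2:ℝ)^n
          ≤ (1 - (1/2:ℝ)^k) * (1/2:ℝ)^n := by
            apply mul_le_mul_of_nonneg_right hkey (le_of_lt hpowpos)
        _ = (1/2:ℝ)^n - (1/2:ℝ)^n * (1/2:ℝ)^k := by ring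
    · obtain ⟨i0, hi0⟩ : ∃ i, i ∉ T := by
        by_contra h
        push_neg at h
        exact hTu (Finset.eq_univ_iff_forall.mpr h)
      have hInf0 : InfB n i0 f = 0 := by rw [hfT, infB_andF, if_neg hi0]
      have hInfnn : ∀ i, 0 ≤ InfB n i f := by
        intro i
        rw [hfT, infB_andF]
        split <;> positivity
      have hiInf : (⨅ i : Fin n, InfB n i f) = 0 := by
        apply le_antisymm
        · rw [← hInf0]
          exact ciInf_le (Set.Finite.bddBelow (Set.finite_range _)) i0
        · exact le_ciInf hInfnn
      rw [hiInf, mul_zero, hfg, hEf, hEg, ← pow_add]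
      rw [ge_iff_le, sub_nonneg]
      apply pow_le_pow_of_le_one (by norm_num) (by norm_num)
      exact Finset.card_union_le T S

lemma infB_reflect (n : ℕ) (i : Fin n) (f : (Fin n → Bool) → ℝ) :
    InfB n i (fun x => 1 - f (fun j => ! x j)) = InfB n i f := by
  set F : (Fin n → Bool) → ℝ :=
    fun y => if f y = f (Function.update y i (! y i)) then 0 else 1 with hF
  have hkey : (fun x => if (1 - f fun j => ! x j)
        = (1 - f fun j => ! Function.update x i (! x i) j) then (0:ℝ) else 1)
      = fun x => F (fun j => ! x j) := by
    funext x
    have hupd : (fun j => ! (Function.update x i (! x i)) j)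
        = Function.update (fun j => ! x j) i (! (! x i)) := by
      funext j
      rcases eq_or_ne j i with rfl | hne
      · rw [Function.update_self, Function.update_self]
      · rw [Function.update_of_ne hne, Function.update_of_ne hne]
    simp only [hF, hupd, sub_right_inj, Bool.not_not]
  rw [InfB, hkey, ev_not]
  rfl


lemma ev_one_sub (n : ℕ) (h : (Fin n → Bool) → ℝ) :
    Ev n (fun x => 1 - h (fun j => ! x j)) = 1 - Ev n h := by
  have e : Ev n (fun x => 1 - h (fun j => ! x j)) = Ev n (fun y => 1 - h y) :=
    ev_not n (fun y => 1 - h y)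
  rw [e, Ev, Finset.sum_sub_distrib, Finset.sum_const, Finset.card_univ,
      Fintype.card_fun, Fintype.card_bool, Fintype.card_fin, nsmul_eq_mul, mul_one,
      sub_div]
  rw [show Ev n h = (∑ x : Fin n → Bool, h x) / 2 ^ n from rfl]
  congr 1
  push_cast
  exact div_self (by positivity)

lemma cov_reflect (n : ℕ) (f g : (Fin n → Bool) → ℝ) :
    Ev n (fun x => (1 - f (fun j => ! x j)) * (1 - g (fun j => ! x j)))
      - Ev n (fun x => 1 - f (fun j => ! x j)) * Ev n (fun x => 1 - g (fun j => ! x j))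
    = Ev n (fun x => f x * g x) - Ev n f * Ev n g := by
  have e3 : Ev n (fun x => (1 - f (fun j => ! x j)) * (1 - g (fun j => ! x j)))
      = 1 - (Ev n f + Ev n g - Ev n (fun x => f x * g x)) := by
    rw [show (fun x : Fin n → Bool => (1 - f (fun j => ! x j)) * (1 - g (fun j => ! x j)))
        = (fun x : Fin n → Bool => 1 - (fun z => f z + g z - f z * g z) (fun j => ! x j)) from
      funext fun x => by simp only []; ring]
    rw [ev_one_sub n (fun z => f z + g z - f z * g z)]
    rw [show Ev n (fun z => f z + g z - f z * g z)
        = Ev n f + Ev n g - Ev n (fun x => f x * g x) from by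
      rw [ev_sub n (fun z => f z + g z) (fun z => f z * g z), ev_add n f g]]
  rw [e3, ev_one_sub n f, ev_one_sub n g]
  ring

/-- Chvátal-type correlation estimate in the super/submodular regime:
if `E[g] = α ∈ (0, 1/2]` then `Cov(f,g) ≥ (α/2) log₂(1/α) · min_i Inf_i[f]`, and if `g`
is moreover antipodal then `Cov(f,g) ≥ (1/4) · min_i Inf_i[f]`. -/
theorem chvatal_type_correlation (n : ℕ) (hn : 0 < n) (f g : (Fin n → Bool) → ℝ)
    (hf01 : ∀ x, f x = 0 ∨ f x = 1) (hg01 : ∀ x, g x = 0 ∨ g x = 1)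
    (hf : Increasing' n f) (hg : Increasing' n g)
    (hmod : (Supermodular' n f ∧ Supermodular' n g) ∨
            (Submodular' n f ∧ Submodular' n g))
    (α : ℝ) (hα : Ev n g = α) (hα0 : 0 < α) (hα2 : α ≤ 1 / 2) :
    (Ev n (fun x => f x * g x) - Ev n f * Ev n g ≥
        (α / 2) * Real.logb 2 (1 / α) * ⨅ i : Fin n, InfB n i f)
    ∧ ((∀ x, g x = 1 - g (fun i => ! x i)) →
        Ev n (fun x => f x * g x) - Ev n f * Ev n g ≥
          (1 / 4) * ⨅ i : Fin n, InfB n i f) := by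
  have h1 : Ev n (fun x => f x * g x) - Ev n f * Ev n g ≥
      (α / 2) * Real.logb 2 (1 / α) * ⨅ i : Fin n, InfB n i f := by
    rcases hmod with ⟨hfsup, hgsup⟩ | ⟨hfsub, hgsub⟩
    · exact main_super n hn f g hf01 hg01 hf hg hfsup hgsup α hα hα0 hα2
    · set F : (Fin n → Bool) → ℝ := fun x => 1 - f (fun j => ! x j) with hFdef
      set G : (Fin n → Bool) → ℝ := fun x => 1 - g (fun j => ! x j) with hGdef
      have hF01 : ∀ x, F x = 0 ∨ F x = 1 := by
        intro x
        rcases hf01 (fun j => ! x j) with h | h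
        · right; simp [hFdef, h]
        · left; simp [hFdef, h]
      have hG01 : ∀ x, G x = 0 ∨ G x = 1 := by
        intro x
        rcases hg01 (fun j => ! x j) with h | h
        · right; simp [hGdef, h]
        · left; simp [hGdef, h]
      have hnotle : ∀ x y : Fin n → Bool, (∀ i, x i ≤ y i) → ∀ i, (! y i) ≤ (! x i) := by
        intro x y hxy i
        have := hxy i
        revert this
        cases x i <;> cases y i <;> decide
      have hFmono : Increasing' n F := by
        intro x y hxy
        have hle := hf _ _ (hnotle x y hxy)
        simp only [hFdef]
        linarith
      have hGmono : Increasing' n G := by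
        intro x y hxy
        have hle := hg _ _ (hnotle x y hxy)
        simp only [hGdef]
        linarith
      have hand : ∀ x y : Fin n → Bool,
          (fun j => ! (x j && y j)) = (fun j => (! x j) || (! y j)) :=
        fun x y => funext fun j => Bool.not_and (x j) (y j)
      have hor : ∀ x y : Fin n → Bool,
          (fun j => ! (x j || y j)) = (fun j => (! x j) && (! y j)) :=
        fun x y => funext fun j => Bool.not_or (x j) (y j)
      have hFsup : Supermodular' n F := by
        intro x y
        have key := hfsub (fun j => ! x j) (fun j => ! y j)
        beta_reduce at key
        simp only [hFdef]
        rw [hand x y, hor x y]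
        linarith
      have hGsup : Supermodular' n G := by
        intro x y
        have key := hgsub (fun j => ! x j) (fun j => ! y j)
        beta_reduce at key
        simp only [hGdef]
        rw [hand x y, hor x y]
        linarith
      have hGE : Ev n G = 1 - α := by rw [hGdef, ev_one_sub, hα]
      have hα12 : α = 1/2 := by
        rcases classify_super n G hG01 hGmono hGsup with hG0 | ⟨S, hSpec⟩
        · exfalso
          have h0 : Ev n G = 0 := by
            rw [show G = fun _ => (0:ℝ) from funext hG0, ev_const]
          rw [hGE] at h0
          linarith
        · have hGv : Ev n G = (1/2:ℝ)^S.card := by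
            rw [show G = andF n S from funext hSpec, ev_andF]
          rw [hGE] at hGv
          rcases Nat.eq_zero_or_pos S.card with h0 | hpos
          · rw [h0, pow_zero] at hGv; linarith
          · have hle : (1/2:ℝ)^S.card ≤ (1/2:ℝ)^1 :=
              pow_le_pow_of_le_one (by norm_num) (by norm_num) hpos
            rw [pow_one] at hle
            linarith
      have hmain := main_super n hn F G hF01 hG01 hFmono hGmono hFsup hGsup (1/2)
        (by rw [hGE, hα12]; norm_num) (by norm_num) (le_refl _)
      have hcov : Ev n (fun x => F x * G x) - Ev n F * Ev n G
          = Ev n (fun x => f x * g x) - Ev n f * Ev n g := by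
        simp only [hFdef, hGdef]
        exact cov_reflect n f g
      have hinfeq : ∀ i, InfB n i F = InfB n i f := by
        intro i
        rw [hFdef]
        exact infB_reflect n i f
      have hinf : (⨅ i : Fin n, InfB n i F) = ⨅ i : Fin n, InfB n i f := by
        simp only [hinfeq]
      rw [hcov, hinf] at hmain
      rw [hα12]
      exact hmain
  refine ⟨h1, fun hanti => ?_⟩
  have hαhalf : α = 1/2 := by
    have e : Ev n g = Ev n (fun x => 1 - g (fun j => ! x j)) := by
      congr 1
      funext x
      exact hanti x
    rw [ev_one_sub, hα] at e
    linarith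
  have hval : (α/2) * Real.logb 2 (1/α) = 1/4 := by
    rw [hαhalf]
    norm_num [Real.logb_self_eq_one]
  rw [hval] at h1
  exact h1
end
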